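/- arXiv:1307.6487 — 4 statements merged into one kernel-verified Lean document; each statement's English description precedes it below -/
import Mathlib

section
/- Let s_i and s_j be adjacent simple transpositions in S_n. The map f^YT_{i,j}: D^YT_{i,j} → D^YT_{j,i} is a bijection whose inverse is f^YT_{j,i}; in particular f^YT_{j,i}(f^YT_{i,j}(Y)) = Y for every Y ∈ D^YT_{i,j}. -/
/-! ## Standard Young tableaux, encoded by entry positions

A filling with `n` entries is a function `p : ℕ → ℕ × ℕ` where `p k` is the
(row, column) position (0-indexed, rows increasing downwards) of the entry
numbered `k + 1`; only the values `p 0, …, p (n-1)` are relevant. -/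

/-- `p` is a standard Young tableau with `n` boxes: the positions of the
entries are distinct and every initial segment of positions forms a Young
diagram (a lower set in `ℕ × ℕ`); this is equivalent to the shape being a
Young diagram with entries strictly increasing along rows and columns. -/
def IsSYT (n : ℕ) (p : ℕ → ℕ × ℕ) : Prop :=
  Set.InjOn p (Set.Iio n) ∧
  ∀ k < n, IsLowerSet {q : ℕ × ℕ | ∃ j ≤ k, p j = q}

/-- The shape (set of boxes) of a filling with `n` entries. -/
def shapeYT (n : ℕ) (p : ℕ → ℕ × ℕ) : Set (ℕ × ℕ) :=
  p '' Set.Iio n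

/-- The τ-invariant of a filling: `i ∈ tauYT n p` encodes the simple
transposition `s_(i+1)` (indices shifted down by one throughout), and holds
when the entry indexed `i + 1` lies in a strictly lower row than the entry
indexed `i`. -/
def tauYT (n : ℕ) (p : ℕ → ℕ × ℕ) : Set ℕ :=
  {i | i + 1 < n ∧ (p i).1 < (p (i + 1)).1}

/-- Exchange the entries indexed `i` and `i + 1` (the action of the simple
transposition `s_(i+1)` on fillings). -/
def swapEntries (i : ℕ) (p : ℕ → ℕ × ℕ) : ℕ → ℕ × ℕ :=
  p ∘ Equiv.swap i (i + 1)

/-- Two simple transpositions indexed by `i` and `j` are adjacent. -/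
def Adjacent (i j : ℕ) : Prop := i = j + 1 ∨ j = i + 1

/-- `D^YT_{i,j}`: standard Young tableaux whose τ-invariant contains `i` but
not `j`. -/
def DYT (n i j : ℕ) (p : ℕ → ℕ × ℕ) : Prop :=
  IsSYT n p ∧ i ∈ tauYT n p ∧ j ∉ tauYT n p

open Classical in
/-- `f^YT_{i,j}` : the unique one of `s_i · Y`, `s_j · Y` that is a standard
tableau lying in `D^YT_{j,i}` (junk outside the intended domain). -/
noncomputable def fYT (n i j : ℕ) (p : ℕ → ℕ × ℕ) : ℕ → ℕ × ℕ :=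
  if DYT n j i (swapEntries i p) then swapEntries i p else swapEntries j p

/-- A column superstandard tableau: the columns are filled consecutively,
`1, …, c₁` down the first column, then `c₁+1, …, c₁+c₂` down the second
column, and so on. -/
def IsColSuperstandard (n : ℕ) (p : ℕ → ℕ × ℕ) : Prop :=
  IsSYT n p ∧ (0 < n → p 0 = (0, 0)) ∧
  ∀ k, k + 1 < n →
    p (k + 1) = ((p k).1 + 1, (p k).2) ∨ p (k + 1) = (0, (p k).2 + 1)

/-- Generalized τ-equivalence to order `m` on fillings. -/
def approxYT (n : ℕ) : ℕ → (ℕ → ℕ × ℕ) → (ℕ → ℕ × ℕ) → Prop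
  | 0, p, q => tauYT n p = tauYT n q
  | m + 1, p, q => approxYT n m p q ∧
      ∀ i j, Adjacent i j → i + 1 < n → j + 1 < n →
        DYT n i j p → DYT n i j q →
        approxYT n m (fYT n i j p) (fYT n i j q)

/-! ## Permutations -/

/-- The τ-invariant of a permutation of `{0, …, n-1}` (one-line notation
`x 0, x 1, …, x (n-1)`): `i ∈ tauSn x` encodes the simple transposition
`s_(i+1)`, and holds iff the value `i + 1` appears to the left of the value
`i`; equivalently `ℓ(s_(i+1) x) < ℓ(x)`. -/
def tauSn {n : ℕ} (x : Equiv.Perm (Fin n)) : Set ℕ :=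
  {i | ∃ h : i + 1 < n, x⁻¹ ⟨i + 1, h⟩ < x⁻¹ ⟨i, Nat.lt_of_succ_lt h⟩}

/-- Left multiplication by the simple transposition exchanging the values
`i` and `i + 1`. -/
def simpleMul {n : ℕ} (i : ℕ) (x : Equiv.Perm (Fin n)) : Equiv.Perm (Fin n) :=
  if h : i + 1 < n then
    Equiv.swap (⟨i, Nat.lt_of_succ_lt h⟩ : Fin n) ⟨i + 1, h⟩ * x
  else x

/-- `D^{S_n}_{i,j}`: permutations whose τ-invariant contains `i` but not `j`. -/
def DSn {n : ℕ} (i j : ℕ) (x : Equiv.Perm (Fin n)) : Prop :=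
  i ∈ tauSn x ∧ j ∉ tauSn x

open Classical in
/-- `f^{S_n}_{i,j}` : the unique one of `s_i x`, `s_j x` lying in
`D^{S_n}_{j,i}` (junk outside the intended domain). -/
noncomputable def fSn {n : ℕ} (i j : ℕ) (x : Equiv.Perm (Fin n)) : Equiv.Perm (Fin n) :=
  if DSn j i (simpleMul i x) then simpleMul i x else simpleMul j x

/-- Generalized τ-equivalence to order `m` on permutations. -/
def approxSn {n : ℕ} : ℕ → Equiv.Perm (Fin n) → Equiv.Perm (Fin n) → Prop
  | 0, x, y => tauSn x = tauSn y
  | m + 1, x, y => approxSn m x y ∧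
      ∀ i j, Adjacent i j → i + 1 < n → j + 1 < n →
        DSn i j x → DSn i j y → approxSn m (fSn i j x) (fSn i j y)

/-- `v` lies strictly between `u` and `w`. -/
def Between {n : ℕ} (u v w : Fin n) : Prop :=
  (u < v ∧ v < w) ∨ (w < v ∧ v < u)

/-- `x` and `y` are related by a dual Knuth step of type `a + 2` (with our
0-indexed values, `a`, `a+1`, `a+2` play the roles of `i-1`, `i`, `i+1`):
their one-line notations differ either by transposing the values `a+1` and
`a+2` with the value `a` appearing between them, or by transposing the
values `a` and `a+1` with the value `a+2` appearing between them. -/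
def DualKnuthStep {n : ℕ} (a : ℕ) (x y : Equiv.Perm (Fin n)) : Prop :=
  ∃ h : a + 2 < n,
    (y = simpleMul (a + 1) x ∧
      Between (x⁻¹ ⟨a + 1, Nat.lt_of_succ_lt h⟩)
        (x⁻¹ ⟨a, Nat.lt_of_succ_lt (Nat.lt_of_succ_lt h)⟩)
        (x⁻¹ ⟨a + 2, h⟩)) ∨
    (y = simpleMul a x ∧
      Between (x⁻¹ ⟨a, Nat.lt_of_succ_lt (Nat.lt_of_succ_lt h)⟩)
        (x⁻¹ ⟨a + 2, h⟩)
        (x⁻¹ ⟨a + 1, Nat.lt_of_succ_lt h⟩))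

/-! ## The Robinson–Schensted correspondence -/

/-- Schensted row-bumping: insert the value `v` into the given rows,
returning the new rows together with the index of the row where a new box
was created. -/
def bump : List (List ℕ) → ℕ → List (List ℕ) × ℕ
  | [], v => ([[v]], 0)
  | r :: rs, v =>
    match r.findIdx? (fun a => decide (v < a)) with
    | none => ((r ++ [v]) :: rs, 0)
    | some c =>
      let out := bump rs (r.getD c 0)
      ((r.set c v) :: out.1, out.2 + 1)

/-- Append the value `k` at the end of row `r` (creating a new row at the
bottom if necessary). -/
def addAt (Q : List (List ℕ)) (r k : ℕ) : List (List ℕ) :=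
  if r < Q.length then Q.set r ((Q.getD r []) ++ [k]) else Q ++ [[k]]

/-- Run the Robinson–Schensted algorithm on the one-line word of `x`,
producing the insertion and recording tableaux as lists of rows (all values
0-indexed). -/
def RSrows {n : ℕ} (x : Equiv.Perm (Fin n)) : List (List ℕ) × List (List ℕ) :=
  (List.finRange n).foldl
    (fun PQ k =>
      let out := bump PQ.1 (x k : ℕ)
      (out.1, addAt PQ.2 out.2 (k : ℕ)))
    ([], [])

/-- The (row, column) position of the value `k` in a list of rows. -/
def posIn (rows : List (List ℕ)) (k : ℕ) : ℕ × ℕ :=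
  (rows.findIdx (fun r => r.contains k),
   (rows.getD (rows.findIdx (fun r => r.contains k)) []).idxOf k)

/-- The insertion tableau `P(x)`, as a position function. -/
def Ptab {n : ℕ} (x : Equiv.Perm (Fin n)) : ℕ → ℕ × ℕ :=
  fun k => posIn (RSrows x).1 k

/-- The recording tableau `Q(x)`, as a position function. -/
def Qtab {n : ℕ} (x : Equiv.Perm (Fin n)) : ℕ → ℕ × ℕ :=
  fun k => posIn (RSrows x).2 k

/-- Generalized τ-equivalence to order `m` between a permutation and a
filling. -/
def approxMixed {n : ℕ} : ℕ → Equiv.Perm (Fin n) → (ℕ → ℕ × ℕ) → Prop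
  | 0, x, p => tauSn x = tauYT n p
  | m + 1, x, p => approxMixed m x p ∧
      ∀ i j, Adjacent i j → i + 1 < n → j + 1 < n →
        DSn i j x → DYT n i j p →
        approxMixed m (fSn i j x) (fYT n i j p)

/-- Sequences of `f^YT`-moves: `ChainDefined n L p` says the sequence of
maps given by `L` is defined on `p`, i.e. each intermediate tableau lies in
the domain of the next map. -/
def ChainDefined (n : ℕ) : List (ℕ × ℕ) → (ℕ → ℕ × ℕ) → Prop
  | [], _ => True
  | ij :: L, p =>
      Adjacent ij.1 ij.2 ∧ ij.1 + 1 < n ∧ ij.2 + 1 < n ∧ DYT n ij.1 ij.2 p ∧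
      ChainDefined n L (fYT n ij.1 ij.2 p)

/-- Apply a sequence of `f^YT`-moves. -/
noncomputable def applySeq (n : ℕ) (L : List (ℕ × ℕ)) (p : ℕ → ℕ × ℕ) : ℕ → ℕ × ℕ :=
  L.foldl (fun q ij => fYT n ij.1 ij.2 q) p

section Aux


lemma swapE_left (a : ℕ) (p : ℕ → ℕ × ℕ) : swapEntries a p a = p (a+1) := by
  simp [swapEntries, Equiv.swap_apply_left]

lemma swapE_right (a : ℕ) (p : ℕ → ℕ × ℕ) : swapEntries a p (a+1) = p a := by
  simp [swapEntries, Equiv.swap_apply_right]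

lemma swapE_ne {a k : ℕ} (p : ℕ → ℕ × ℕ) (h1 : k ≠ a) (h2 : k ≠ a + 1) :
    swapEntries a p k = p k := by
  simp [swapEntries, Equiv.swap_apply_of_ne_of_ne h1 h2]

lemma swapE_swapE (a : ℕ) (p : ℕ → ℕ × ℕ) : swapEntries a (swapEntries a p) = p := by
  funext k
  simp [swapEntries, Function.comp, Equiv.swap_apply_self]

lemma mem_tau {n t : ℕ} {p : ℕ → ℕ × ℕ} :
    t ∈ tauYT n p ↔ t + 1 < n ∧ (p t).1 < (p (t + 1)).1 := Iff.rfl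

lemma lemA {n : ℕ} {p : ℕ → ℕ × ℕ} (h : IsSYT n p) {m l : ℕ} (hml : m < l) (hl : l < n) :
    ¬ p l ≤ p m := by
  intro hle
  have hm : m < n := lt_trans hml hl
  have : p l ∈ {q : ℕ × ℕ | ∃ j ≤ m, p j = q} :=
    (h.2 m hm) hle ⟨m, le_refl m, rfl⟩
  obtain ⟨j, hj, hpj⟩ := this
  have : j = l := h.1 (Set.mem_Iio.mpr (lt_of_le_of_lt hj hm)) (Set.mem_Iio.mpr hl) hpj
  omega

lemma mem_init {n : ℕ} {p : ℕ → ℕ × ℕ} (h : IsSYT n p) {k : ℕ} (hk : k < n)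
    {w : ℕ × ℕ} (hw : w ≤ p k) : ∃ m ≤ k, p m = w :=
  (h.2 k hk) hw ⟨k, le_refl k, rfl⟩

lemma lemAdj {n : ℕ} {p : ℕ → ℕ × ℕ} (h : IsSYT n p) {k : ℕ} (hk : k + 1 < n)
    (hle : p k ≤ p (k + 1)) :
    p (k + 1) = ((p k).1 + 1, (p k).2) ∨ p (k + 1) = ((p k).1, (p k).2 + 1) := by
  have hne : p k ≠ p (k + 1) := by
    intro he
    have : k = k + 1 := h.1 (Set.mem_Iio.mpr (by omega)) (Set.mem_Iio.mpr hk) he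
    omega
  rw [Prod.le_def] at hle
  rcases Nat.lt_or_ge (p k).1 (p (k+1)).1 with hr | hr
  · left
    have hw : ((p (k+1)).1 - 1, (p (k+1)).2) ≤ p (k+1) := by
      rw [Prod.le_def]; constructor <;> simp
    obtain ⟨m, hm, hpm⟩ := mem_init h hk hw
    have h1 := congrArg Prod.fst hpm
    have h2 := congrArg Prod.snd hpm
    simp only [] at h1 h2
    rcases Nat.lt_or_ge m k with hmk | hmk
    · exfalso
      refine lemA h hmk (by omega) ?_
      rw [Prod.le_def]; constructor <;> omega
    · have hcase : m = k ∨ m = k + 1 := by omega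
      rcases hcase with rfl | rfl
      · rw [Prod.ext_iff]; constructor <;> omega
      · exfalso; omega
  · right
    have hreq : (p k).1 = (p (k+1)).1 := le_antisymm hle.1 hr
    have hc : (p k).2 < (p (k+1)).2 := by
      rcases Nat.lt_or_ge (p k).2 (p (k+1)).2 with h' | h'
      · exact h'
      · exact absurd (Prod.ext hreq (le_antisymm hle.2 h')) hne
    have hw : ((p (k+1)).1, (p (k+1)).2 - 1) ≤ p (k+1) := by
      rw [Prod.le_def]; constructor <;> simp
    obtain ⟨m, hm, hpm⟩ := mem_init h hk hw
    have h1 := congrArg Prod.fst hpm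
    have h2 := congrArg Prod.snd hpm
    simp only [] at h1 h2
    rcases Nat.lt_or_ge m k with hmk | hmk
    · exfalso
      refine lemA h hmk (by omega) ?_
      rw [Prod.le_def]; constructor <;> omega
    · have hcase : m = k ∨ m = k + 1 := by omega
      rcases hcase with rfl | rfl
      · rw [Prod.ext_iff]; constructor <;> omega
      · exfalso; omega

lemma isSYT_swap {n : ℕ} {p : ℕ → ℕ × ℕ} (h : IsSYT n p) {a : ℕ} (ha : a + 1 < n)
    (hnle : ¬ p a ≤ p (a + 1)) : IsSYT n (swapEntries a p) := by
  have hsw : ∀ k, Equiv.swap a (a+1) k = if k = a then a + 1 else if k = a + 1 then a else k := by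
    intro k; rw [Equiv.swap_apply_def]
  constructor
  · intro x hx y hy hxy
    simp only [Set.mem_Iio] at hx hy
    have hx' : Equiv.swap a (a+1) x < n := by rw [hsw]; split_ifs <;> omega
    have hy' : Equiv.swap a (a+1) y < n := by rw [hsw]; split_ifs <;> omega
    have := h.1 (Set.mem_Iio.mpr hx') (Set.mem_Iio.mpr hy') hxy
    exact (Equiv.swap a (a+1)).injective this
  · intro k hk
    by_cases hka : k = a
    · subst hka
      intro x q hq hx
      obtain ⟨j, hj, hpj⟩ := hx
      have hja : Equiv.swap k (k+1) j ≤ k + 1 := by rw [hsw]; split_ifs <;> omega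
      have hx1 : x ∈ {q : ℕ × ℕ | ∃ j ≤ k + 1, p j = q} := ⟨_, hja, hpj⟩
      have hq1 := (h.2 (k+1) ha) hq hx1
      obtain ⟨m, hm, hpm⟩ := hq1
      rcases Nat.lt_or_ge m k with hma | hma
      · exact ⟨m, le_of_lt hma, by rw [swapE_ne p (by omega) (by omega)]; exact hpm⟩
      · have hcase : m = k ∨ m = k + 1 := by omega
        rcases hcase with rfl | hm1
        · exfalso
          rcases Nat.lt_or_ge j m with hja' | hja'
          · have hj' : Equiv.swap m (m+1) j = j := by rw [hsw]; split_ifs <;> omega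
            rw [swapEntries, Function.comp_apply, hj'] at hpj
            exact lemA h hja' (by omega) (by rw [hpm, hpj]; exact hq)
          · have hjm : j = m := by omega
            subst hjm
            rw [swapEntries, Function.comp_apply, Equiv.swap_apply_left] at hpj
            exact hnle (by rw [hpm, hpj]; exact hq)
        · subst hm1
          exact ⟨k, le_refl k, by rw [swapE_left]; exact hpm⟩
    · have hset : {q : ℕ × ℕ | ∃ j ≤ k, swapEntries a p j = q} =
          {q : ℕ × ℕ | ∃ j ≤ k, p j = q} := by
        have hbnd : ∀ j ≤ k, Equiv.swap a (a+1) j ≤ k := by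
          intro j hj
          rw [hsw]
          rcases Nat.lt_or_ge k a with h' | h'
          · split_ifs <;> omega
          · have : a + 1 ≤ k := by omega
            split_ifs <;> omega
        ext q
        constructor
        · rintro ⟨j, hj, rfl⟩
          exact ⟨Equiv.swap a (a+1) j, hbnd j hj, rfl⟩
        · rintro ⟨j, hj, rfl⟩
          refine ⟨Equiv.swap a (a+1) j, hbnd j hj, ?_⟩
          simp [swapEntries, Equiv.swap_apply_self]
      rw [hset]
      exact h.2 k hk

lemma keyA {n a : ℕ} (ha : a + 2 < n) {p : ℕ → ℕ × ℕ} (hp : DYT n a (a+1) p) :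
    DYT n (a+1) a (fYT n a (a+1) p) ∧ fYT n (a+1) a (fYT n a (a+1) p) = p := by
  obtain ⟨hsyt, hta, htb⟩ := hp
  have ha1 : a + 1 < n := by omega
  have hnn : p (a+1+1) = p (a+2) := rfl
  have r01 : (p a).1 < (p (a+1)).1 := hta.2
  have r21 : (p (a+2)).1 ≤ (p (a+1)).1 := by
    by_contra h
    exact htb ⟨ha, by rw [hnn]; omega⟩
  by_cases hc : (p (a+2)).1 ≤ (p a).1
  · -- case A-i : use swapEntries (a+1)
    have hneg : ¬ DYT n (a+1) a (swapEntries a p) := by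
      intro hD
      have h := hD.2.1.2
      have v1 : swapEntries a p (a+1) = p a := swapE_right a p
      have v2 : swapEntries a p (a+1+1) = p (a+2) := swapE_ne p (by omega) (by omega)
      rw [v1, v2] at h
      omega
    rw [fYT, if_neg hneg]
    have hnle : ¬ p (a+1) ≤ p (a+1+1) := by
      intro hle
      have h := (Prod.le_def.mp hle).1
      rw [hnn] at h
      omega
    have hq : DYT n (a+1) a (swapEntries (a+1) p) := by
      refine ⟨isSYT_swap hsyt ha hnle, ⟨ha, ?_⟩, ?_⟩
      · have v1 : swapEntries (a+1) p (a+1) = p (a+2) := swapE_left (a+1) p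
        have v2 : swapEntries (a+1) p (a+1+1) = p (a+1) := swapE_right (a+1) p
        rw [v1, v2]
        omega
      · intro hmem
        have h := hmem.2
        have v1 : swapEntries (a+1) p a = p a := swapE_ne p (by omega) (by omega)
        have v2 : swapEntries (a+1) p (a+1) = p (a+2) := swapE_left (a+1) p
        rw [v1, v2] at h
        omega
    refine ⟨hq, ?_⟩
    rw [fYT]
    have hsw : swapEntries (a+1) (swapEntries (a+1) p) = p := swapE_swapE _ _
    rw [hsw, if_pos ⟨hsyt, hta, htb⟩]
  · -- case A-ii : use swapEntries a
    push_neg at hc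
    have hnle : ¬ p a ≤ p (a+1) := by
      intro hle
      rcases lemAdj hsyt ha1 hle with h1 | h2
      · have e1 := congrArg Prod.fst h1
        have e2 := congrArg Prod.snd h1
        simp only [] at e1 e2
        have hc2 : (p (a+1)).2 < (p (a+2)).2 := by
          have hA := lemA hsyt (show a+1 < a+2 by omega) ha
          rw [Prod.le_def] at hA
          push_neg at hA
          have := hA (by omega)
          omega
        have hw : ((p a).1, (p (a+2)).2) ≤ p (a+2) := by
          rw [Prod.le_def]; constructor <;> simp <;> omega
        obtain ⟨m, hm, hpm⟩ := mem_init hsyt ha hw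
        have f1 := congrArg Prod.fst hpm
        have f2 := congrArg Prod.snd hpm
        simp only [] at f1 f2
        rcases Nat.lt_or_ge m a with hma | hma
        · refine lemA hsyt hma (by omega) ?_
          rw [Prod.le_def]; constructor <;> omega
        · have hcase : m = a ∨ m = a + 1 ∨ m = a + 2 := by omega
          rcases hcase with rfl | rfl | rfl <;> omega
      · have h := congrArg Prod.fst h2
        simp only [] at h
        omega
    have hq : DYT n (a+1) a (swapEntries a p) := by
      refine ⟨isSYT_swap hsyt ha1 hnle, ⟨ha, ?_⟩, ?_⟩
      · have v1 : swapEntries a p (a+1) = p a := swapE_right a p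
        have v2 : swapEntries a p (a+1+1) = p (a+2) := swapE_ne p (by omega) (by omega)
        rw [v1, v2]
        omega
      · intro hmem
        have h := hmem.2
        have v1 : swapEntries a p a = p (a+1) := swapE_left a p
        have v2 : swapEntries a p (a+1) = p a := swapE_right a p
        rw [v1, v2] at h
        omega
    rw [fYT, if_pos hq]
    refine ⟨hq, ?_⟩
    rw [fYT]
    have hneg2 : ¬ DYT n a (a+1) (swapEntries (a+1) (swapEntries a p)) := by
      intro hD
      have h := hD.2.1.2
      have v1 : swapEntries (a+1) (swapEntries a p) a = p (a+1) := by
        rw [swapE_ne (swapEntries a p) (by omega) (by omega), swapE_left]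
      have v2 : swapEntries (a+1) (swapEntries a p) (a+1) = p (a+2) := by
        rw [swapE_left]
        exact swapE_ne p (by omega) (by omega)
      rw [v1, v2] at h
      omega
    rw [if_neg hneg2, swapE_swapE]

lemma keyB {n a : ℕ} (ha : a + 2 < n) {p : ℕ → ℕ × ℕ} (hp : DYT n (a+1) a p) :
    DYT n a (a+1) (fYT n (a+1) a p) ∧ fYT n a (a+1) (fYT n (a+1) a p) = p := by
  obtain ⟨hsyt, hta, htb⟩ := hp
  have ha1 : a + 1 < n := by omega
  have hnn : p (a+1+1) = p (a+2) := rfl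
  have r12 : (p (a+1)).1 < (p (a+2)).1 := by
    have h := hta.2
    rw [hnn] at h
    exact h
  have r10 : (p (a+1)).1 ≤ (p a).1 := by
    by_contra h
    exact htb ⟨ha1, by omega⟩
  by_cases hc : (p (a+2)).1 ≤ (p a).1
  · -- case B-i : use swapEntries a ; here r1 < r2 ≤ r0
    have hneg : ¬ DYT n a (a+1) (swapEntries (a+1) p) := by
      intro hD
      have h := hD.2.1.2
      have v1 : swapEntries (a+1) p a = p a := swapE_ne p (by omega) (by omega)
      have v2 : swapEntries (a+1) p (a+1) = p (a+2) := swapE_left (a+1) p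
      rw [v1, v2] at h
      omega
    rw [fYT, if_neg hneg]
    have hnle : ¬ p a ≤ p (a+1) := by
      intro hle
      have h := (Prod.le_def.mp hle).1
      omega
    have hq : DYT n a (a+1) (swapEntries a p) := by
      refine ⟨isSYT_swap hsyt ha1 hnle, ⟨ha1, ?_⟩, ?_⟩
      · have v1 : swapEntries a p a = p (a+1) := swapE_left a p
        have v2 : swapEntries a p (a+1) = p a := swapE_right a p
        rw [v1, v2]
        omega
      · intro hmem
        have h := hmem.2
        have v1 : swapEntries a p (a+1) = p a := swapE_right a p
        have v2 : swapEntries a p (a+1+1) = p (a+2) := swapE_ne p (by omega) (by omega)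
        rw [v1, v2] at h
        omega
    refine ⟨hq, ?_⟩
    rw [fYT]
    have hsw : swapEntries a (swapEntries a p) = p := swapE_swapE _ _
    rw [hsw, if_pos ⟨hsyt, hta, htb⟩]
  · -- case B-ii : use swapEntries (a+1) ; here r1 ≤ r0 < r2
    push_neg at hc
    have hnle : ¬ p (a+1) ≤ p (a+1+1) := by
      rw [hnn]
      intro hle
      have hle' : p (a+1) ≤ p (a+1+1) := by rw [hnn]; exact hle
      rcases lemAdj hsyt ha hle' with h1 | h2
      · have e1 := congrArg Prod.fst h1
        have e2 := congrArg Prod.snd h1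
        simp only [] at e1 e2
        rw [hnn] at e1 e2
        have hc01 : (p a).2 < (p (a+1)).2 := by
          have hA := lemA hsyt (show a < a+1 by omega) ha1
          rw [Prod.le_def] at hA
          push_neg at hA
          have := hA (by omega)
          omega
        have hw : ((p (a+2)).1, (p (a+1)).2 - 1) ≤ p (a+2) := by
          rw [Prod.le_def]; constructor <;> simp <;> omega
        obtain ⟨m, hm, hpm⟩ := mem_init hsyt ha hw
        have f1 := congrArg Prod.fst hpm
        have f2 := congrArg Prod.snd hpm
        simp only [] at f1 f2
        rcases Nat.lt_or_ge m a with hma | hma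
        · refine lemA hsyt hma (by omega) ?_
          rw [Prod.le_def]; constructor <;> omega
        · have hcase : m = a ∨ m = a + 1 ∨ m = a + 2 := by omega
          rcases hcase with rfl | rfl | rfl <;> omega
      · have h := congrArg Prod.fst h2
        simp only [] at h
        rw [hnn] at h
        omega
    have hq : DYT n a (a+1) (swapEntries (a+1) p) := by
      refine ⟨isSYT_swap hsyt ha hnle, ⟨ha1, ?_⟩, ?_⟩
      · have v1 : swapEntries (a+1) p a = p a := swapE_ne p (by omega) (by omega)
        have v2 : swapEntries (a+1) p (a+1) = p (a+2) := swapE_left (a+1) p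
        rw [v1, v2]
        omega
      · intro hmem
        have h := hmem.2
        have v1 : swapEntries (a+1) p (a+1) = p (a+2) := swapE_left (a+1) p
        have v2 : swapEntries (a+1) p (a+1+1) = p (a+1) := swapE_right (a+1) p
        rw [v1, v2] at h
        omega
    rw [fYT, if_pos hq]
    refine ⟨hq, ?_⟩
    rw [fYT]
    have hneg2 : ¬ DYT n (a+1) a (swapEntries a (swapEntries (a+1) p)) := by
      intro hD
      have h := hD.2.1.2
      have v1 : swapEntries a (swapEntries (a+1) p) (a+1) = p a := by
        rw [swapE_right]
        exact swapE_ne p (by omega) (by omega)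
      have v2 : swapEntries a (swapEntries (a+1) p) (a+1+1) = p (a+1) := by
        have e1 : swapEntries a (swapEntries (a+1) p) (a+1+1) = swapEntries (a+1) p (a+1+1) :=
          swapE_ne (swapEntries (a+1) p) (by omega) (by omega)
        rw [e1]
        exact swapE_right (a+1) p
      rw [v1, v2] at h
      omega
    rw [if_neg hneg2, swapE_swapE]

end Aux

/-- For adjacent simple transpositions `s_i`, `s_j` in `S_n`,
the map `f^YT_{i,j} : D^YT_{i,j} → D^YT_{j,i}` is a bijection with inverse
`f^YT_{j,i}`; in particular `f^YT_{j,i} (f^YT_{i,j} Y) = Y` on `D^YT_{i,j}`. -/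
theorem stmt1 (n i j : ℕ) (hadj : Adjacent i j) (hi : i + 1 < n) (hj : j + 1 < n) :
    (∀ p, DYT n i j p → DYT n j i (fYT n i j p)) ∧
    (∀ p, DYT n i j p → fYT n j i (fYT n i j p) = p) ∧
    (∀ p, DYT n j i p → DYT n i j (fYT n j i p)) ∧
    (∀ p, DYT n j i p → fYT n i j (fYT n j i p) = p) := by
  rcases hadj with h | h
  · subst h
    have ha : j + 2 < n := by omega
    exact ⟨fun p hp => (keyB ha hp).1, fun p hp => (keyB ha hp).2,
           fun p hp => (keyA ha hp).1, fun p hp => (keyA ha hp).2⟩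
  · subst h
    have ha : i + 2 < n := by omega
    exact ⟨fun p hp => (keyA ha hp).1, fun p hp => (keyA ha hp).2,
           fun p hp => (keyB ha hp).1, fun p hp => (keyB ha hp).2⟩
end

section
/- Let Γ be a column superstandard tableau and let Y be a standard Young tableau of the same shape as Γ. If τ(Y) = τ(Γ), then Y = Γ. -/
/-- Colexicographic (column, then row) strict order on boxes. -/
def cltAux (q q' : ℕ × ℕ) : Prop := q.2 < q'.2 ∨ (q.2 = q'.2 ∧ q.1 < q'.1)

lemma cltAux_trans {a b c : ℕ × ℕ} (h1 : cltAux a b) (h2 : cltAux b c) :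
    cltAux a c := by
  unfold cltAux at *; omega

lemma cltAux_irrefl (a : ℕ × ℕ) : ¬ cltAux a a := by unfold cltAux; omega

lemma cltAux_asymm {a b : ℕ × ℕ} (h : cltAux a b) : ¬ cltAux b a := by
  unfold cltAux at *; omega

lemma colex_strictMono {n : ℕ} {g : ℕ → ℕ × ℕ} (hg : IsColSuperstandard n g) :
    ∀ j k, j < k → k < n → cltAux (g j) (g k) := by
  intro j k
  induction k with
  | zero => omega
  | succ k ih =>
    intro hjk hkn
    have hstep : cltAux (g k) (g (k + 1)) := by
      rcases hg.2.2 k hkn with h | h <;> rw [h] <;> unfold cltAux <;> dsimp <;> omega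
    rcases Nat.lt_or_ge j k with h | h
    · exact cltAux_trans (ih h (by omega)) hstep
    · have : j = k := by omega
      subst this; exact hstep

lemma not_clt_of_le {n : ℕ} {g : ℕ → ℕ × ℕ} (hg : IsColSuperstandard n g)
    {j k : ℕ} (hjk : j ≤ k) (hk : k < n) : ¬ cltAux (g k) (g j) := by
  rcases Nat.lt_or_ge j k with h | h
  · exact cltAux_asymm (colex_strictMono hg j k h hk)
  · have : j = k := by omega
    subst this; exact cltAux_irrefl _
/-- If `Γ` is column superstandard and `Y` is a standard
tableau of the same shape with `τ(Y) = τ(Γ)`, then `Y = Γ`. -/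
theorem stmt3 (n : ℕ) (g p : ℕ → ℕ × ℕ) (hg : IsColSuperstandard n g)
    (hp : IsSYT n p) (hshape : shapeYT n p = shapeYT n g)
    (htau : tauYT n p = tauYT n g) :
    ∀ k < n, p k = g k := by
  have key : ∀ k, ∀ j ≤ k, j < n → p j = g j := by
    intro k
    induction k with
    | zero =>
      intro j hj hjn
      have hj0 : j = 0 := by omega
      subst hj0
      have hg0 : g 0 = (0, 0) := hg.2.1 (by omega)
      have hL : IsLowerSet {q : ℕ × ℕ | ∃ j ≤ 0, p j = q} := hp.2 0 hjn
      have hmem : p 0 ∈ {q : ℕ × ℕ | ∃ j ≤ 0, p j = q} := ⟨0, le_rfl, rfl⟩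
      have h00 : ((0, 0) : ℕ × ℕ) ∈ {q : ℕ × ℕ | ∃ j ≤ 0, p j = q} :=
        hL (Prod.mk_le_mk.mpr ⟨Nat.zero_le _, Nat.zero_le _⟩) hmem
      obtain ⟨i, hi0, hpi⟩ := h00
      have : i = 0 := by omega
      subst this
      rw [hpi, hg0]
    | succ k ih =>
      intro j hj hjn
      rcases Nat.lt_or_ge j (k + 1) with h | h
      · exact ih j (by omega) hjn
      · have hje : j = k + 1 := by omega
        subst hje
        have hkn : k < n := by omega
        have hL : IsLowerSet {q : ℕ × ℕ | ∃ i ≤ k + 1, p i = q} := hp.2 (k + 1) hjn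
        have hmem : p (k + 1) ∈ {q : ℕ × ℕ | ∃ i ≤ k + 1, p i = q} :=
          ⟨k + 1, le_rfl, rfl⟩
        -- every strictly smaller box is an old box, hence not colex-above `g k`
        have hbelow : ∀ q : ℕ × ℕ, q ≤ p (k + 1) → q ≠ p (k + 1) →
            ¬ cltAux (g k) q := by
          intro q hle hne
          have hqS : q ∈ {q : ℕ × ℕ | ∃ i ≤ k + 1, p i = q} := hL hle hmem
          obtain ⟨i, hik, hpi⟩ := hqS
          rcases Nat.lt_or_ge i (k + 1) with hi | hi
          · have : g i = q := by rw [← ih i (by omega) (by omega), hpi]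
            rw [← this]
            exact not_clt_of_le hg (by omega) hkn
          · exact absurd (by rw [← hpi]; congr 1; omega) hne
        -- p (k+1) is a new box: colex-above g k
        have hnewclt : cltAux (g k) (p (k + 1)) := by
          have hshp : p (k + 1) ∈ shapeYT n g := by
            rw [← hshape]; exact ⟨k + 1, hjn, rfl⟩
          obtain ⟨i, hin, hgi⟩ := hshp
          simp only [Set.mem_Iio] at hin
          rcases Nat.lt_or_ge k i with hi | hi
          · rw [← hgi]
            exact colex_strictMono hg k i hi hin
          · exfalso
            have hpg : p i = g i := ih i hi hin
            have hpeq : p i = p (k + 1) := by rw [hpg, hgi]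
            have : i = k + 1 :=
              hp.1 (Set.mem_Iio.mpr hin) (Set.mem_Iio.mpr hjn) hpeq
            omega
        have hnat : (g k).2 < (p (k + 1)).2 ∨
            ((g k).2 = (p (k + 1)).2 ∧ (g k).1 < (p (k + 1)).1) := hnewclt
        have htauk : k ∈ tauYT n p ↔ k ∈ tauYT n g := by rw [htau]
        have hstep := hg.2.2 k hjn
        have hpk : p k = g k := ih k le_rfl hkn
        have hsplit : p (k + 1) = ((p (k + 1)).1, (p (k + 1)).2) := rfl
        by_cases hmemtau : k ∈ tauYT n g
        · -- case A: g (k+1) = ((g k).1 + 1, (g k).2)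
          have hgk1 : g (k + 1) = ((g k).1 + 1, (g k).2) := by
            rcases hstep with h1 | h1
            · exact h1
            · exfalso
              have h2 : (g k).1 < (g (k + 1)).1 := hmemtau.2
              rw [h1] at h2; simp at h2
          have hptau : (p k).1 < (p (k + 1)).1 := (htauk.mpr hmemtau).2
          rw [hpk] at hptau
          have hne : (((p (k + 1)).1 - 1, (p (k + 1)).2) : ℕ × ℕ) ≠ p (k + 1) := by
            intro hcon
            have := congrArg Prod.fst hcon
            simp only [Prod.fst] at this
            omega
          have hup : ¬ ((g k).2 < (p (k + 1)).2 ∨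
              ((g k).2 = (p (k + 1)).2 ∧ (g k).1 < (p (k + 1)).1 - 1)) :=
            hbelow ((p (k + 1)).1 - 1, (p (k + 1)).2)
              (Prod.mk_le_mk.mpr ⟨by omega, le_rfl⟩) hne
          rw [hsplit, hgk1, Prod.mk.injEq]
          omega
        · -- case B: g (k+1) = (0, (g k).2 + 1)
          have hgk1 : g (k + 1) = (0, (g k).2 + 1) := by
            rcases hstep with h1 | h1
            · exfalso
              exact hmemtau ⟨hjn, by rw [h1]; exact Nat.lt_succ_self _⟩
            · exact h1
          have hptau : ¬ ((p k).1 < (p (k + 1)).1) := fun hcon =>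
            hmemtau (htauk.mp ⟨hjn, hcon⟩)
          rw [hpk] at hptau
          have hr0 : (p (k + 1)).1 = 0 := by
            by_contra hr0
            have hne : (((p (k + 1)).1 - 1, (p (k + 1)).2) : ℕ × ℕ) ≠ p (k + 1) := by
              intro hcon
              have := congrArg Prod.fst hcon
              simp only [Prod.fst] at this
              omega
            have hup : ¬ ((g k).2 < (p (k + 1)).2 ∨
                ((g k).2 = (p (k + 1)).2 ∧ (g k).1 < (p (k + 1)).1 - 1)) :=
              hbelow ((p (k + 1)).1 - 1, (p (k + 1)).2)
                (Prod.mk_le_mk.mpr ⟨by omega, le_rfl⟩) hne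
            omega
          have hcC : (p (k + 1)).2 = (g k).2 + 1 := by
            by_contra hcc
            have hcgt : (g k).2 < (p (k + 1)).2 := by omega
            have hne : ((0, (p (k + 1)).2 - 1) : ℕ × ℕ) ≠ p (k + 1) := by
              intro hcon
              have := congrArg Prod.snd hcon
              simp only [Prod.snd] at this
              omega
            have hleft : ¬ ((g k).2 < (p (k + 1)).2 - 1 ∨
                ((g k).2 = (p (k + 1)).2 - 1 ∧ (g k).1 < 0)) :=
              hbelow (0, (p (k + 1)).2 - 1)
                (Prod.mk_le_mk.mpr ⟨by omega, by omega⟩) hne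
            omega
          rw [hsplit, hgk1, Prod.mk.injEq]
          omega
  intro k hk
  exact key k k le_rfl hk
end

section
/- If Y and Y' are standard Young tableaux with n boxes whose Young diagrams have different shapes, then τ_g(Y) ≠ τ_g(Y'); that is, there exists m ≥ 0 such that Y and Y' are not equivalent to order m. -/
/-! ## Auxiliary development for Statement 6 -/

namespace Stmt6Aux

/-- The set of boxes occupied by the entries `0, …, k`. -/
def Lev (p : ℕ → ℕ × ℕ) (k : ℕ) : Set (ℕ × ℕ) := {q : ℕ × ℕ | ∃ j ≤ k, p j = q}

lemma isSYT_mono {n k : ℕ} {p : ℕ → ℕ × ℕ} (hp : IsSYT n p) (hk : k ≤ n) : IsSYT k p :=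
  ⟨hp.1.mono (fun x hx => lt_of_lt_of_le hx hk),
   fun t ht => hp.2 t (lt_of_lt_of_le ht hk)⟩

lemma mem_lev {p : ℕ → ℕ × ℕ} {k j : ℕ} (hj : j ≤ k) : p j ∈ Lev p k := ⟨j, hj, rfl⟩

lemma lev_lower {n : ℕ} {p : ℕ → ℕ × ℕ} (hp : IsSYT n p) {k : ℕ} (hk : k < n) :
    IsLowerSet (Lev p k) := hp.2 k hk

lemma inj_ne {n : ℕ} {p : ℕ → ℕ × ℕ} (hp : IsSYT n p) {a b : ℕ} (ha : a < n) (hb : b < n)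
    (hne : a ≠ b) : p a ≠ p b :=
  fun h => hne (hp.1 (Set.mem_Iio.mpr ha) (Set.mem_Iio.mpr hb) h)

/-- A later entry never sits weakly above-left of an earlier one. -/
lemma B1 {n a b : ℕ} {p : ℕ → ℕ × ℕ} (hp : IsSYT n p) (hab : a < b) (hb : b < n) :
    ¬ p b ≤ p a := by
  intro hle
  obtain ⟨j, hj, hje⟩ := lev_lower hp (lt_trans hab hb) hle (mem_lev le_rfl)
  have : j = b := hp.1 (Set.mem_Iio.mpr (lt_of_le_of_lt hj (lt_trans hab hb)))
    (Set.mem_Iio.mpr hb) hje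
  omega

lemma mem_lev_of_le {n t : ℕ} {p : ℕ → ℕ × ℕ} (hp : IsSYT n p) (ht : t < n)
    {w : ℕ × ℕ} (hw : w ≤ p t) : ∃ j ≤ t, p j = w :=
  lev_lower hp ht hw (mem_lev le_rfl)

lemma swap_self (k : ℕ) (p : ℕ → ℕ × ℕ) : swapEntries k p k = p (k+1) := by
  simp [swapEntries, Equiv.swap_apply_left]

lemma swap_succ (k : ℕ) (p : ℕ → ℕ × ℕ) : swapEntries k p (k+1) = p k := by
  simp [swapEntries, Equiv.swap_apply_right]

lemma swap_other {k t : ℕ} (p : ℕ → ℕ × ℕ) (h1 : t ≠ k) (h2 : t ≠ k+1) :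
    swapEntries k p t = p t := by
  simp [swapEntries, Equiv.swap_apply_of_ne_of_ne h1 h2]

/-- No box strictly between two consecutive entries' boxes. -/
lemma no_between {n a : ℕ} {p : ℕ → ℕ × ℕ} (hp : IsSYT n p) (ha : a + 1 < n)
    {w : ℕ × ℕ} (h0 : p a ≤ w) (h1 : w ≤ p (a+1)) : w = p a ∨ w = p (a+1) := by
  by_contra h
  push_neg at h
  obtain ⟨j, hj, hje⟩ := mem_lev_of_le hp ha h1
  have hja : j ≠ a := fun e => h.1 (by rw [← hje, e])
  have hja1 : j ≠ a + 1 := fun e => h.2 (by rw [← hje, e])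
  have hjlt : j < a := by omega
  exact B1 hp hjlt (by omega) (hje ▸ h0)

/-- Consecutive comparable entries occupy adjacent boxes. -/
lemma cover {n a : ℕ} {p : ℕ → ℕ × ℕ} (hp : IsSYT n p) (ha : a + 1 < n)
    (hle : p a ≤ p (a+1)) :
    p (a+1) = ((p a).1 + 1, (p a).2) ∨ p (a+1) = ((p a).1, (p a).2 + 1) := by
  have hne : p a ≠ p (a+1) := inj_ne hp (by omega) ha (by omega)
  obtain ⟨hr, hc⟩ := Prod.le_def.mp hle
  rcases Nat.lt_or_ge (p a).1 (p (a+1)).1 with h | h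
  · rcases Nat.lt_or_ge (p a).2 (p (a+1)).2 with h' | h'
    · exfalso
      have := no_between hp ha (w := ((p a).1, (p (a+1)).2))
        (Prod.le_def.mpr ⟨le_rfl, le_of_lt h'⟩) (Prod.le_def.mpr ⟨le_of_lt h, le_rfl⟩)
      rcases this with h2 | h2
      · exact absurd (congrArg Prod.snd h2) (by simp; omega)
      · exact absurd (congrArg Prod.fst h2) (by simp; omega)
    · have hceq : (p (a+1)).2 = (p a).2 := le_antisymm h' hc
      rcases (show (p (a+1)).1 = (p a).1 + 1 ∨ (p a).1 + 2 ≤ (p (a+1)).1 by omega) with h2 | h2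
      · left; exact Prod.ext_iff.mpr ⟨h2, hceq⟩
      · exfalso
        have := no_between hp ha (w := ((p a).1 + 1, (p a).2))
          (Prod.le_def.mpr ⟨by omega, le_rfl⟩) (Prod.le_def.mpr ⟨by omega, by omega⟩)
        rcases this with h3 | h3
        · exact absurd (congrArg Prod.fst h3) (by simp)
        · exact absurd (congrArg Prod.fst h3) (by simp; omega)
  · have hreq : (p (a+1)).1 = (p a).1 := le_antisymm h hr
    have hclt : (p a).2 < (p (a+1)).2 := by
      rcases Nat.lt_or_ge (p a).2 (p (a+1)).2 with h' | h'
      · exact h'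
      · exact absurd (Prod.ext_iff.mpr ⟨hreq, (le_antisymm hc h').symm⟩ : p (a+1) = p a) hne.symm
    rcases (show (p (a+1)).2 = (p a).2 + 1 ∨ (p a).2 + 2 ≤ (p (a+1)).2 by omega) with h2 | h2
    · right; exact Prod.ext_iff.mpr ⟨hreq, h2⟩
    · exfalso
      have := no_between hp ha (w := ((p a).1, (p a).2 + 1))
        (Prod.le_def.mpr ⟨le_rfl, by omega⟩) (Prod.le_def.mpr ⟨by omega, by omega⟩)
      rcases this with h3 | h3
      · exact absurd (congrArg Prod.snd h3) (by simp)
      · exact absurd (congrArg Prod.snd h3) (by simp; omega)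

lemma swap_injOn {n k : ℕ} {p : ℕ → ℕ × ℕ} (hp : IsSYT n p) (hk : k + 1 < n) :
    Set.InjOn (swapEntries k p) (Set.Iio n) := by
  intro x hx y hy hxy
  have hσ : ∀ t, t < n → (Equiv.swap k (k+1)) t < n := by
    intro t ht
    rcases eq_or_ne t k with rfl | h1
    · rw [Equiv.swap_apply_left]; omega
    rcases eq_or_ne t (k+1) with rfl | h2
    · rw [Equiv.swap_apply_right]; omega
    · rw [Equiv.swap_apply_of_ne_of_ne h1 h2]; exact ht
  have := hp.1 (Set.mem_Iio.mpr (hσ x (Set.mem_Iio.mp hx)))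
    (Set.mem_Iio.mpr (hσ y (Set.mem_Iio.mp hy))) hxy
  exact (Equiv.swap k (k+1)).injective this

lemma swap_lev_ne {k t : ℕ} (p : ℕ → ℕ × ℕ) (ht : t ≠ k) :
    {q : ℕ × ℕ | ∃ j ≤ t, swapEntries k p j = q} = Lev p t := by
  ext x
  constructor
  · rintro ⟨j, hj, rfl⟩
    rcases eq_or_ne j k with rfl | h1
    · rw [swap_self]
      exact ⟨j+1, by omega, rfl⟩
    rcases eq_or_ne j (k+1) with rfl | h2
    · rw [swap_succ]; exact ⟨k, by omega, rfl⟩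
    · rw [swap_other p h1 h2]; exact ⟨j, hj, rfl⟩
  · rintro ⟨j, hj, rfl⟩
    rcases eq_or_ne j k with rfl | h1
    · exact ⟨j+1, by omega, swap_succ j p⟩
    rcases eq_or_ne j (k+1) with rfl | h2
    · exact ⟨k, by omega, swap_self k p⟩
    · exact ⟨j, hj, swap_other p h1 h2⟩

lemma swap_lev_k_lower {n k : ℕ} {p : ℕ → ℕ × ℕ} (hp : IsSYT n p) (hk : k + 1 < n)
    (hn : ¬ p k ≤ p (k+1)) :
    IsLowerSet {q : ℕ × ℕ | ∃ j ≤ k, swapEntries k p j = q} := by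
  intro x y hyx hx
  obtain ⟨j, hj, hje⟩ := hx
  rcases eq_or_ne j k with rfl | hjk
  · rw [swap_self] at hje
    have hb : y ≤ p (j+1) := hje ▸ hyx
    obtain ⟨j', hj', hje'⟩ := mem_lev_of_le hp hk hb
    rcases eq_or_ne j' (j+1) with rfl | h1
    · exact ⟨j, le_rfl, by rw [swap_self, hje']⟩
    rcases eq_or_ne j' j with rfl | h2
    · exact absurd (hje' ▸ hb) hn
    · exact ⟨j', by omega, by rw [swap_other p h2 h1, hje']⟩
  · rw [swap_other p hjk (by omega)] at hje
    have hb : y ≤ p j := hje ▸ hyx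
    obtain ⟨j', hj', hje'⟩ := mem_lev_of_le hp (by omega) hb
    exact ⟨j', by omega, by rw [swap_other p (by omega) (by omega)]; exact hje'⟩

/-- Criterion: swapping consecutive entries of an SYT is again an SYT iff
their boxes are incomparable. -/
lemma swap_isSYT_iff {n k : ℕ} {p : ℕ → ℕ × ℕ} (hp : IsSYT n p) (hk : k + 1 < n) :
    IsSYT n (swapEntries k p) ↔ ¬ p k ≤ p (k+1) := by
  constructor
  · intro hs hle
    have hlow := hs.2 k (by omega)
    have hmem : p (k+1) ∈ {q : ℕ × ℕ | ∃ j ≤ k, swapEntries k p j = q} :=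
      ⟨k, le_rfl, swap_self k p⟩
    obtain ⟨j, hj, hje⟩ := hlow hle hmem
    rcases eq_or_ne j k with rfl | hjk
    · rw [swap_self] at hje
      exact inj_ne hp hk (by omega) (by omega) hje
    · rw [swap_other p hjk (by omega)] at hje
      exact inj_ne hp (by omega) (by omega) (show j ≠ k by omega) hje
  · intro hn
    refine ⟨swap_injOn hp hk, ?_⟩
    intro t ht
    rcases eq_or_ne t k with rfl | htk
    · exact swap_lev_k_lower hp hk hn
    · rw [swap_lev_ne p htk]
      exact hp.2 t ht

lemma tau_mem_iff {n i : ℕ} {p : ℕ → ℕ × ℕ} :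
    i ∈ tauYT n p ↔ i + 1 < n ∧ (p i).1 < (p (i + 1)).1 := Iff.rfl

lemma fYT_eq_of {n i j : ℕ} {p : ℕ → ℕ × ℕ} (hD : DYT n j i (swapEntries i p)) :
    fYT n i j p = swapEntries i p := by
  unfold fYT; rw [if_pos hD]

lemma fYT_eq_not {n i j : ℕ} {p : ℕ → ℕ × ℕ} (hD : ¬ DYT n j i (swapEntries i p)) :
    fYT n i j p = swapEntries j p := by
  unfold fYT; rw [if_neg hD]

lemma fYT_cases (n i j : ℕ) (p : ℕ → ℕ × ℕ) :
    fYT n i j p = swapEntries i p ∨ fYT n i j p = swapEntries j p := by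
  unfold fYT; split
  · exact Or.inl rfl
  · exact Or.inr rfl

lemma pcast (p : ℕ → ℕ × ℕ) (i : ℕ) : p (i+1+1) = p (i+2) := rfl

/-- Move lemma, case `(i, j) = (i, i+1)`. -/
lemma ML1 {n i : ℕ} {p : ℕ → ℕ × ℕ} (hp : IsSYT n p) (h2 : i + 2 < n)
    (hd : (p i).1 < (p (i+1)).1) (hnd : ¬ (p (i+1)).1 < (p (i+2)).1) :
    DYT n (i+1) i (fYT n i (i+1) p) ∧
      (¬ (p i).1 < (p (i+2)).1 → fYT n i (i+1) p = swapEntries (i+1) p) := by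
  have hr21 : (p (i+2)).1 ≤ (p (i+1)).1 := Nat.le_of_not_lt hnd
  have hb12 : ¬ p (i+2) ≤ p (i+1) := B1 hp (by omega) h2
  have hc12 : (p (i+1)).2 < (p (i+2)).2 := by
    by_contra hcc
    exact hb12 (Prod.le_def.mpr ⟨hr21, by omega⟩)
  by_cases hc : p i ≤ p (i+1)
  · -- case α : entries i, i+1 vertically adjacent
    have hq1 : p (i+1) = ((p i).1 + 1, (p i).2) := by
      rcases cover hp (by omega) hc with h | h
      · exact h
      · rw [h] at hd; simp at hd
    have hr1 : (p (i+1)).1 = (p i).1 + 1 := by rw [hq1]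
    have hc1 : (p (i+1)).2 = (p i).2 := by rw [hq1]
    have hr20 : (p (i+2)).1 ≤ (p i).1 := by
      by_contra hgt
      push_neg at hgt
      rcases (show (p (i+2)).2 = (p (i+1)).2 + 1 ∨ (p (i+1)).2 + 2 ≤ (p (i+2)).2
          by omega) with hcc | hcc
      · obtain ⟨j, hj, hje⟩ := mem_lev_of_le hp h2 (w := ((p i).1, (p (i+2)).2))
          (Prod.le_def.mpr ⟨by omega, le_rfl⟩)
        have e1 : (p j).1 = (p i).1 := by rw [hje]
        have e2 : (p j).2 = (p (i+2)).2 := by rw [hje]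
        have hj2 : j ≠ i + 2 := fun e => by rw [e] at e1; omega
        have hj1 : j ≠ i + 1 := fun e => by rw [e] at e1; omega
        have hj0 : j ≠ i := fun e => by rw [e] at e2; omega
        exact B1 hp (show j < i by omega) (by omega)
          (Prod.le_def.mpr ⟨by omega, by omega⟩)
      · obtain ⟨j, hj, hje⟩ := mem_lev_of_le hp h2
          (w := ((p (i+1)).1, (p (i+2)).2 - 1))
          (Prod.le_def.mpr ⟨by omega, by omega⟩)
        have e1 : (p j).1 = (p (i+1)).1 := by rw [hje]
        have e2 : (p j).2 = (p (i+2)).2 - 1 := by rw [hje]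
        have hj2 : j ≠ i + 2 := fun e => by rw [e] at e2; omega
        have hj1 : j ≠ i + 1 := fun e => by rw [e] at e2; omega
        have hj0 : j ≠ i := fun e => by rw [e] at e1; omega
        exact B1 hp (show j < i + 1 by omega) (by omega)
          (Prod.le_def.mpr ⟨by omega, by omega⟩)
    have hnsw : ¬ IsSYT n (swapEntries i p) :=
      fun hs => (swap_isSYT_iff hp (by omega)).mp hs hc
    have hfy : fYT n i (i+1) p = swapEntries (i+1) p := fYT_eq_not (fun hD => hnsw hD.1)
    have hsw2 : IsSYT n (swapEntries (i+1) p) := by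
      refine (swap_isSYT_iff hp (show (i+1) + 1 < n by omega)).mpr (fun hle => ?_)
      have := (Prod.le_def.mp hle).1
      simp only [pcast] at this
      omega
    rw [hfy]
    refine ⟨⟨hsw2, ⟨by omega, ?_⟩, ?_⟩, fun _ => rfl⟩
    · rw [swap_self, swap_succ]; simp only [pcast]; omega
    · rintro ⟨-, hlt⟩
      rw [swap_other p (by omega) (by omega), swap_self] at hlt
      simp only [pcast] at hlt
      omega
  · -- case β : entries i, i+1 incomparable
    have hsw1 : IsSYT n (swapEntries i p) := (swap_isSYT_iff hp (by omega)).mpr hc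
    by_cases hb : (p i).1 < (p (i+2)).1
    · -- β2
      have hD : DYT n (i+1) i (swapEntries i p) := by
        refine ⟨hsw1, ⟨by omega, ?_⟩, ?_⟩
        · rw [swap_succ, swap_other p (by omega) (by omega)]
          simp only [pcast]
          exact hb
        · rintro ⟨-, hlt⟩
          rw [swap_self, swap_succ] at hlt
          omega
      rw [fYT_eq_of hD]
      exact ⟨hD, fun hnb => absurd hb hnb⟩
    · -- β1
      have hnD : ¬ DYT n (i+1) i (swapEntries i p) := by
        rintro ⟨-, ⟨-, hlt⟩, -⟩
        rw [swap_succ, swap_other p (by omega) (by omega)] at hlt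
        simp only [pcast] at hlt
        exact hb hlt
      have hfy := fYT_eq_not hnD
      have hsw2 : IsSYT n (swapEntries (i+1) p) := by
        refine (swap_isSYT_iff hp (show (i+1) + 1 < n by omega)).mpr (fun hle => ?_)
        have := (Prod.le_def.mp hle).1
        simp only [pcast] at this
        omega
      rw [hfy]
      refine ⟨⟨hsw2, ⟨by omega, ?_⟩, ?_⟩, fun _ => rfl⟩
      · rw [swap_self, swap_succ]; simp only [pcast]; omega
      · rintro ⟨-, hlt⟩
        rw [swap_other p (by omega) (by omega), swap_self] at hlt
        simp only [pcast] at hlt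
        exact hb hlt

/-- Move lemma, case `(i, j) = (j+1, j)`. -/
lemma ML2 {n j : ℕ} {p : ℕ → ℕ × ℕ} (hp : IsSYT n p) (h2 : j + 2 < n)
    (hd : (p (j+1)).1 < (p (j+2)).1) (hnd : ¬ (p j).1 < (p (j+1)).1) :
    DYT n j (j+1) (fYT n (j+1) j p) ∧
      (¬ p (j+1) ≤ p (j+2) → (p j).1 < (p (j+2)).1 →
        fYT n (j+1) j p = swapEntries (j+1) p) := by
  have hs10 : (p (j+1)).1 ≤ (p j).1 := Nat.le_of_not_lt hnd
  have hb01 : ¬ p (j+1) ≤ p j := B1 hp (by omega) (by omega)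
  have hc01 : (p j).2 < (p (j+1)).2 := by
    by_contra hcc
    exact hb01 (Prod.le_def.mpr ⟨hs10, by omega⟩)
  by_cases hc : p (j+1) ≤ p (j+2)
  · -- case γ : entries j+1, j+2 vertically adjacent
    have hq2 : p (j+2) = ((p (j+1)).1 + 1, (p (j+1)).2) := by
      rcases cover hp (show (j+1) + 1 < n by omega) hc with h | h
      · exact h
      · rw [h] at hd; simp at hd
    have hr2 : (p (j+2)).1 = (p (j+1)).1 + 1 := by rw [hq2]
    have hc2 : (p (j+2)).2 = (p (j+1)).2 := by rw [hq2]
    have hss : (p (j+1)).1 < (p j).1 := by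
      rcases Nat.lt_or_ge (p (j+1)).1 (p j).1 with h | h
      · exact h
      · -- rows equal : derive contradiction
        exfalso
        have hseq : (p j).1 = (p (j+1)).1 := by omega
        have hcv : p (j+1) = ((p j).1, (p j).2 + 1) := by
          rcases cover hp (show j + 1 < n by omega)
              (show p j ≤ p (j+1) from Prod.le_def.mpr ⟨by omega, by omega⟩) with h' | h'
          · rw [h'] at hseq; simp at hseq
          · exact h'
        have hcv1 : (p (j+1)).2 = (p j).2 + 1 := by rw [hcv]
        obtain ⟨jj, hjj, hje⟩ := mem_lev_of_le hp h2 (w := ((p j).1 + 1, (p j).2))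
          (Prod.le_def.mpr ⟨by omega, by omega⟩)
        have e1 : (p jj).1 = (p j).1 + 1 := by rw [hje]
        have e2 : (p jj).2 = (p j).2 := by rw [hje]
        have hj2 : jj ≠ j + 2 := fun e => by rw [e] at e2; omega
        have hj1 : jj ≠ j + 1 := fun e => by rw [e] at e1; omega
        have hj0 : jj ≠ j := fun e => by rw [e] at e1; omega
        exact B1 hp (show jj < j by omega) (by omega)
          (Prod.le_def.mpr ⟨by omega, by omega⟩)
    have hnsw : ¬ IsSYT n (swapEntries (j+1) p) :=
      fun hs => (swap_isSYT_iff hp (show (j+1) + 1 < n by omega)).mp hs hc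
    have hfy : fYT n (j+1) j p = swapEntries j p := fYT_eq_not (fun hD => hnsw hD.1)
    have hswj : IsSYT n (swapEntries j p) := by
      refine (swap_isSYT_iff hp (by omega)).mpr (fun hle => ?_)
      have := (Prod.le_def.mp hle).1
      omega
    rw [hfy]
    refine ⟨⟨hswj, ⟨by omega, ?_⟩, ?_⟩, fun hn2 _ => absurd hc hn2⟩
    · rw [swap_self, swap_succ]; omega
    · rintro ⟨-, hlt⟩
      rw [swap_succ, swap_other p (by omega) (by omega)] at hlt
      simp only [pcast] at hlt
      omega
  · -- case δ : entries j+1, j+2 incomparable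
    have hsw2 : IsSYT n (swapEntries (j+1) p) :=
      (swap_isSYT_iff hp (show (j+1) + 1 < n by omega)).mpr hc
    by_cases hb : (p j).1 < (p (j+2)).1
    · -- δ1
      have hD : DYT n j (j+1) (swapEntries (j+1) p) := by
        refine ⟨hsw2, ⟨by omega, ?_⟩, ?_⟩
        · rw [swap_self, swap_other p (by omega) (by omega)]
          simp only [pcast]
          exact hb
        · rintro ⟨-, hlt⟩
          rw [swap_self, swap_succ] at hlt
          simp only [pcast] at hlt
          omega
      rw [fYT_eq_of hD]
      exact ⟨hD, fun _ _ => rfl⟩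
    · -- δ2
      have hnD : ¬ DYT n j (j+1) (swapEntries (j+1) p) := by
        rintro ⟨-, ⟨-, hlt⟩, -⟩
        rw [swap_self, swap_other p (by omega) (by omega)] at hlt
        simp only [pcast] at hlt
        exact hb hlt
      have hfy := fYT_eq_not hnD
      have hss : (p (j+1)).1 < (p j).1 := by
        rcases Nat.lt_or_ge (p (j+1)).1 (p j).1 with h | h
        · exact h
        · omega
      have hswj : IsSYT n (swapEntries j p) := by
        refine (swap_isSYT_iff hp (by omega)).mpr (fun hle => ?_)
        have := (Prod.le_def.mp hle).1
        omega
      rw [hfy]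
      refine ⟨⟨hswj, ⟨by omega, ?_⟩, ?_⟩, fun _ hb' => absurd hb' hb⟩
      · rw [swap_self, swap_succ]; omega
      · rintro ⟨-, hlt⟩
        rw [swap_succ, swap_other p (by omega) (by omega)] at hlt
        simp only [pcast] at hlt
        exact hb hlt

/-- The move lemma: `fYT` maps `D_{i,j}` into `D_{j,i}`. -/
lemma move_lemma {n i j : ℕ} {p : ℕ → ℕ × ℕ} (hadj : Adjacent i j) (hi : i + 1 < n)
    (hj : j + 1 < n) (hD : DYT n i j p) : DYT n j i (fYT n i j p) := by
  rcases hadj with hadj | hadj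
  · -- i = j + 1
    subst hadj
    have h := ML2 (j := j) hD.1 (by omega) hD.2.1.2
      (fun hlt => hD.2.2 ⟨by omega, hlt⟩)
    exact h.1
  · -- j = i + 1
    subst hadj
    have h := ML1 (i := i) hD.1 (by omega) hD.2.1.2
      (fun hlt => hD.2.2 ⟨by omega, hlt⟩)
    exact h.1

/-! ### approx lemmas -/

lemma approx_le {n : ℕ} {p p' : ℕ → ℕ × ℕ} : ∀ {m m' : ℕ}, m ≤ m' →
    approxYT n m' p p' → approxYT n m p p' := by
  intro m m' h
  induction m' with
  | zero =>
    intro h'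
    have hm0 : m = 0 := by omega
    subst hm0
    exact h'
  | succ k ih =>
    intro h'
    rcases eq_or_ne m (k+1) with rfl | hne
    · exact h'
    · exact ih (by omega) h'.1

lemma approx_tau {n m : ℕ} {p p' : ℕ → ℕ × ℕ} (h : approxYT n m p p') :
    tauYT n p = tauYT n p' :=
  approx_le (Nat.zero_le m) h

lemma approx_symm {n : ℕ} : ∀ (m : ℕ) {p p' : ℕ → ℕ × ℕ},
    approxYT n m p p' → approxYT n m p' p := by
  intro m
  induction m with
  | zero => intro p p' h; exact (h : tauYT n p = tauYT n p').symm
  | succ k ih =>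
    intro p p' h
    exact ⟨ih h.1, fun i j adj hi hj D D' => ih (h.2 i j adj hi hj D' D)⟩

/-! ### chain lemmas -/

lemma applySeq_nil (n : ℕ) (p : ℕ → ℕ × ℕ) : applySeq n [] p = p := rfl

lemma applySeq_cons (n : ℕ) (ij : ℕ × ℕ) (L : List (ℕ × ℕ)) (p : ℕ → ℕ × ℕ) :
    applySeq n (ij :: L) p = applySeq n L (fYT n ij.1 ij.2 p) := rfl

lemma applySeq_append (n : ℕ) (L1 L2 : List (ℕ × ℕ)) (p : ℕ → ℕ × ℕ) :
    applySeq n (L1 ++ L2) p = applySeq n L2 (applySeq n L1 p) := by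
  unfold applySeq; rw [List.foldl_append]

lemma chain_append {n : ℕ} : ∀ (L1 : List (ℕ × ℕ)) {L2 : List (ℕ × ℕ)} {p : ℕ → ℕ × ℕ},
    ChainDefined n L1 p → ChainDefined n L2 (applySeq n L1 p) →
    ChainDefined n (L1 ++ L2) p := by
  intro L1
  induction L1 with
  | nil => intro L2 p _ h2; exact h2
  | cons ij L ih =>
    intro L2 p h1 h2
    exact ⟨h1.1, h1.2.1, h1.2.2.1, h1.2.2.2.1, ih h1.2.2.2.2 h2⟩

lemma chain_syt {n : ℕ} : ∀ (L : List (ℕ × ℕ)) {p : ℕ → ℕ × ℕ},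
    ChainDefined n L p → IsSYT n p → IsSYT n (applySeq n L p) := by
  intro L
  induction L with
  | nil => intro p _ h; exact h
  | cons ij L ih =>
    intro p hC _
    have h := move_lemma hC.1 hC.2.1 hC.2.2.1 hC.2.2.2.1
    exact ih hC.2.2.2.2 h.1

lemma fYT_high {n i j t : ℕ} (p : ℕ → ℕ × ℕ) (h1 : t ≠ i) (h2 : t ≠ i+1)
    (h3 : t ≠ j) (h4 : t ≠ j+1) : fYT n i j p t = p t := by
  rcases fYT_cases n i j p with h | h
  · rw [h]; exact swap_other p h1 h2
  · rw [h]; exact swap_other p h3 h4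

/-! ### lifting between sizes `N` and `N+1` -/

lemma tau_lift {N s : ℕ} {p : ℕ → ℕ × ℕ} (hs : s + 1 < N) :
    s ∈ tauYT N p ↔ s ∈ tauYT (N+1) p :=
  ⟨fun h => ⟨by omega, h.2⟩, fun h => ⟨hs, h.2⟩⟩

lemma DYT_lift {N i j : ℕ} {p : ℕ → ℕ × ℕ} (hp : IsSYT (N+1) p) (hi : i+1 < N)
    (hj : j+1 < N) : DYT N i j p ↔ DYT (N+1) i j p :=
  ⟨fun h => ⟨hp, (tau_lift hi).mp h.2.1, fun hh => h.2.2 ((tau_lift hj).mpr hh)⟩,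
   fun h => ⟨isSYT_mono hp (by omega), (tau_lift hi).mpr h.2.1,
     fun hh => h.2.2 ((tau_lift hj).mp hh)⟩⟩

lemma fYT_lift {N i j : ℕ} {p : ℕ → ℕ × ℕ} (hp : IsSYT (N+1) p) (hi : i+1 < N)
    (hj : j+1 < N) : fYT N i j p = fYT (N+1) i j p := by
  have h1 : IsSYT N (swapEntries i p) ↔ IsSYT (N+1) (swapEntries i p) := by
    rw [swap_isSYT_iff (isSYT_mono hp (by omega)) hi, swap_isSYT_iff hp (by omega)]
  have hiff : DYT N j i (swapEntries i p) ↔ DYT (N+1) j i (swapEntries i p) := by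
    constructor
    · rintro ⟨a, b, c⟩
      exact ⟨h1.mp a, (tau_lift hj).mp b, fun hh => c ((tau_lift hi).mpr hh)⟩
    · rintro ⟨a, b, c⟩
      exact ⟨h1.mpr a, (tau_lift hj).mpr b, fun hh => c ((tau_lift hi).mp hh)⟩
  by_cases hD : DYT N j i (swapEntries i p)
  · rw [fYT_eq_of hD, fYT_eq_of (hiff.mp hD)]
  · rw [fYT_eq_not hD, fYT_eq_not (fun h => hD (hiff.mpr h))]

lemma lift_chain {N : ℕ} : ∀ (L : List (ℕ × ℕ)) {p : ℕ → ℕ × ℕ},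
    IsSYT (N+1) p → ChainDefined N L p →
    ChainDefined (N+1) L p ∧ applySeq (N+1) L p = applySeq N L p ∧
      applySeq (N+1) L p N = p N := by
  intro L
  induction L with
  | nil => intro p _ _; exact ⟨trivial, rfl, rfl⟩
  | cons ij L ih =>
    intro p hp hC
    obtain ⟨adj, hi, hj, hD, hrest⟩ := hC
    have hD' := (DYT_lift hp hi hj).mp hD
    have hf := fYT_lift hp hi hj
    have hsyt : IsSYT (N+1) (fYT N ij.1 ij.2 p) := by
      rw [hf]; exact (move_lemma adj (by omega) (by omega) hD').1
    obtain ⟨C', e', eN⟩ := ih hsyt hrest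
    refine ⟨⟨adj, by omega, by omega, hD', by rw [← hf]; exact C'⟩, ?_, ?_⟩
    · show applySeq (N+1) L (fYT (N+1) ij.1 ij.2 p) = applySeq N L (fYT N ij.1 ij.2 p)
      rw [← hf]; exact e'
    · show applySeq (N+1) L (fYT (N+1) ij.1 ij.2 p) N = p N
      rw [← hf, eN]
      exact fYT_high p (by omega) (by omega) (by omega) (by omega)

lemma chain_bounds {n : ℕ} : ∀ (L : List (ℕ × ℕ)) {p : ℕ → ℕ × ℕ},
    ChainDefined n L p → ∀ ij ∈ L, ij.1 + 1 < n ∧ ij.2 + 1 < n := by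
  intro L
  induction L with
  | nil => intro p _ ij h; simp at h
  | cons kl L ih =>
    intro p hC ij hij
    rcases List.mem_cons.mp hij with rfl | h
    · exact ⟨hC.2.1, hC.2.2.1⟩
    · exact ih hC.2.2.2.2 ij h

/-! ### parallel chains -/

lemma parallel {N : ℕ} : ∀ (L : List (ℕ × ℕ)) {q q' : ℕ → ℕ × ℕ},
    IsSYT (N+1) q → IsSYT (N+1) q' → (∀ s, s < N → q s = q' s) →
    (∀ ij ∈ L, ij.1 + 1 < N ∧ ij.2 + 1 < N) → ChainDefined (N+1) L q →
    ChainDefined (N+1) L q' ∧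
    (∀ s, s < N → applySeq (N+1) L q s = applySeq (N+1) L q' s) ∧
    applySeq (N+1) L q N = q N ∧ applySeq (N+1) L q' N = q' N := by
  intro L
  induction L with
  | nil => intro q q' _ _ hagree _ _; exact ⟨trivial, hagree, rfl, rfl⟩
  | cons ij L ih =>
    intro q q' hq hq' hagree hbd hC
    obtain ⟨adj, hi1, hj1, hD, hrest⟩ := hC
    obtain ⟨hi, hj⟩ := hbd ij List.mem_cons_self
    have htau : ∀ s, s + 1 < N → (s ∈ tauYT (N+1) q ↔ s ∈ tauYT (N+1) q') := by
      intro s hs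
      unfold tauYT
      simp only [Set.mem_setOf_eq]
      rw [hagree s (by omega), hagree (s+1) (by omega)]
    have hD' : DYT (N+1) ij.1 ij.2 q' :=
      ⟨hq', (htau _ hi).mp hD.2.1, fun hh => hD.2.2 ((htau _ hj).mpr hh)⟩
    have hswagree : ∀ k, k + 1 < N → ∀ s, s < N →
        swapEntries k q s = swapEntries k q' s := by
      intro k hk s hs
      rcases eq_or_ne s k with rfl | h1
      · rw [swap_self, swap_self]; exact hagree _ (by omega)
      rcases eq_or_ne s (k+1) with rfl | h2
      · rw [swap_succ, swap_succ]; exact hagree _ (by omega)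
      · rw [swap_other q h1 h2, swap_other q' h1 h2]; exact hagree _ hs
    have hbranch : DYT (N+1) ij.2 ij.1 (swapEntries ij.1 q) ↔
        DYT (N+1) ij.2 ij.1 (swapEntries ij.1 q') := by
      have hS : IsSYT (N+1) (swapEntries ij.1 q) ↔ IsSYT (N+1) (swapEntries ij.1 q') := by
        rw [swap_isSYT_iff hq (by omega), swap_isSYT_iff hq' (by omega),
          hagree ij.1 (by omega), hagree (ij.1+1) (by omega)]
      have htau' : ∀ s, s + 1 < N →
          (s ∈ tauYT (N+1) (swapEntries ij.1 q) ↔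
            s ∈ tauYT (N+1) (swapEntries ij.1 q')) := by
        intro s hs
        unfold tauYT
        simp only [Set.mem_setOf_eq]
        rw [hswagree ij.1 hi s (by omega), hswagree ij.1 hi (s+1) (by omega)]
      constructor
      · rintro ⟨a, b, c⟩
        exact ⟨hS.mp a, (htau' _ hj).mp b, fun hh => c ((htau' _ hi).mpr hh)⟩
      · rintro ⟨a, b, c⟩
        exact ⟨hS.mpr a, (htau' _ hj).mpr b, fun hh => c ((htau' _ hi).mp hh)⟩
    have hfagree : ∀ s, s < N → fYT (N+1) ij.1 ij.2 q s = fYT (N+1) ij.1 ij.2 q' s := by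
      by_cases hDD : DYT (N+1) ij.2 ij.1 (swapEntries ij.1 q)
      · intro s hs
        rw [fYT_eq_of hDD, fYT_eq_of (hbranch.mp hDD)]
        exact hswagree ij.1 hi s hs
      · intro s hs
        rw [fYT_eq_not hDD, fYT_eq_not (fun hh => hDD (hbranch.mpr hh))]
        exact hswagree ij.2 hj s hs
    have hsytq : IsSYT (N+1) (fYT (N+1) ij.1 ij.2 q) := (move_lemma adj hi1 hj1 hD).1
    have hsytq' : IsSYT (N+1) (fYT (N+1) ij.1 ij.2 q') := (move_lemma adj hi1 hj1 hD').1
    obtain ⟨C', hval, hNq, hNq'⟩ := ih hsytq hsytq' hfagree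
      (fun x hx => hbd x (List.mem_cons_of_mem _ hx)) hrest
    refine ⟨⟨adj, hi1, hj1, hD', C'⟩, hval, ?_, ?_⟩
    · show applySeq (N+1) L (fYT (N+1) ij.1 ij.2 q) N = q N
      rw [hNq]
      exact fYT_high q (by omega) (by omega) (by omega) (by omega)
    · show applySeq (N+1) L (fYT (N+1) ij.1 ij.2 q') N = q' N
      rw [hNq']
      exact fYT_high q' (by omega) (by omega) (by omega) (by omega)

/-! ### transfer of approx along chains -/

lemma transfer {n : ℕ} : ∀ (L : List (ℕ × ℕ)) {p p' : ℕ → ℕ × ℕ} (m : ℕ),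
    ChainDefined n L p → ChainDefined n L p' → approxYT n (L.length + m) p p' →
    approxYT n m (applySeq n L p) (applySeq n L p') := by
  intro L
  induction L with
  | nil =>
    intro p p' m _ _ h
    rw [List.length_nil, Nat.zero_add] at h
    exact h
  | cons ij L ih =>
    intro p p' m hC hC' h
    obtain ⟨adj, hi, hj, hD, hrest⟩ := hC
    obtain ⟨-, -, -, hD', hrest'⟩ := hC'
    have h' : approxYT n ((L.length + m) + 1) p p' := by
      rw [List.length_cons] at h
      rwa [show L.length + 1 + m = L.length + m + 1 by omega] at h
    exact ih m hrest hrest' (h'.2 ij.1 ij.2 adj hi hj hD hD')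

/-! ### restriction of approx from `N+1` boxes to `N` boxes -/

lemma approx_restrict {N : ℕ} : ∀ (m : ℕ) {p p' : ℕ → ℕ × ℕ},
    IsSYT (N+1) p → IsSYT (N+1) p' → approxYT (N+1) m p p' → approxYT N m p p' := by
  intro m
  induction m with
  | zero =>
    intro p p' _ _ h
    have h' : tauYT (N+1) p = tauYT (N+1) p' := h
    show tauYT N p = tauYT N p'
    ext s
    constructor
    · rintro ⟨hs, hlt⟩
      have : s ∈ tauYT (N+1) p' := h' ▸ (⟨by omega, hlt⟩ : s ∈ tauYT (N+1) p)
      exact ⟨hs, this.2⟩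
    · rintro ⟨hs, hlt⟩
      have : s ∈ tauYT (N+1) p := h'.symm ▸ (⟨by omega, hlt⟩ : s ∈ tauYT (N+1) p')
      exact ⟨hs, this.2⟩
  | succ k ih =>
    intro p p' hp hp' h
    refine ⟨ih hp hp' h.1, ?_⟩
    intro i j adj hi hj D D'
    have hD1 := (DYT_lift hp hi hj).mp D
    have hD1' := (DYT_lift hp' hi hj).mp D'
    have step := h.2 i j adj (by omega) (by omega) hD1 hD1'
    rw [← fYT_lift hp hi hj, ← fYT_lift hp' hi hj] at step
    have hs1 : IsSYT (N+1) (fYT N i j p) := by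
      rw [fYT_lift hp hi hj]
      exact (move_lemma adj (by omega) (by omega) hD1).1
    have hs2 : IsSYT (N+1) (fYT N i j p') := by
      rw [fYT_lift hp' hi hj]
      exact (move_lemma adj (by omega) (by omega) hD1').1
    exact ih hs1 hs2 step

lemma approx_down {p p' : ℕ → ℕ × ℕ} : ∀ (n k : ℕ), k ≤ n → IsSYT n p → IsSYT n p' →
    (∀ m, approxYT n m p p') → ∀ m, approxYT k m p p' := by
  intro n
  induction n with
  | zero =>
    intro k hk _ _ h m
    have : k = 0 := by omega
    subst this
    exact h m
  | succ N ih =>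
    intro k hk hp hp' h m
    rcases eq_or_ne k (N+1) with rfl | hne
    · exact h m
    · exact ih k (by omega) (isSYT_mono hp (by omega)) (isSYT_mono hp' (by omega))
        (fun m => approx_restrict m hp hp' (h m)) m

/-! ### shape lemmas -/

lemma mem_shape {n : ℕ} {x : ℕ × ℕ} {p : ℕ → ℕ × ℕ} :
    x ∈ shapeYT n p ↔ ∃ j < n, p j = x := by
  simp [shapeYT, Set.mem_image, Set.mem_Iio]

lemma shape_zero (p : ℕ → ℕ × ℕ) : shapeYT 0 p = ∅ := by
  ext x; simp [mem_shape]

lemma shape_succ (n : ℕ) (p : ℕ → ℕ × ℕ) :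
    shapeYT (n+1) p = shapeYT n p ∪ {p n} := by
  ext x
  simp only [mem_shape, Set.mem_union, Set.mem_singleton_iff]
  constructor
  · rintro ⟨j, hj, rfl⟩
    rcases eq_or_ne j n with rfl | h
    · right; rfl
    · left; exact ⟨j, by omega, rfl⟩
  · rintro (⟨j, hj, rfl⟩ | rfl)
    · exact ⟨j, by omega, rfl⟩
    · exact ⟨n, by omega, rfl⟩

lemma shape_eq_lev (n : ℕ) (p : ℕ → ℕ × ℕ) : shapeYT (n+1) p = Lev p n := by
  ext x
  simp only [mem_shape]
  constructor
  · rintro ⟨j, hj, rfl⟩; exact ⟨j, by omega, rfl⟩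
  · rintro ⟨j, hj, rfl⟩; exact ⟨j, by omega, rfl⟩

lemma shape_lower {n : ℕ} {p : ℕ → ℕ × ℕ} (hp : IsSYT n p) :
    IsLowerSet (shapeYT n p) := by
  cases n with
  | zero => rw [shape_zero]; exact isLowerSet_empty
  | succ N => rw [shape_eq_lev]; exact hp.2 N (by omega)

lemma shape_congr {k : ℕ} {q q' : ℕ → ℕ × ℕ} (h : ∀ t, t < k → q t = q' t) :
    shapeYT k q = shapeYT k q' := by
  ext x
  simp only [mem_shape]
  constructor
  · rintro ⟨j, hj, rfl⟩; exact ⟨j, hj, (h j hj).symm⟩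
  · rintro ⟨j, hj, rfl⟩; exact ⟨j, hj, h j hj⟩

lemma shape_pred {N : ℕ} {p : ℕ → ℕ × ℕ} (hp : IsSYT (N+1) p) :
    shapeYT N p = shapeYT (N+1) p \ {p N} := by
  ext x
  simp only [mem_shape, Set.mem_diff, Set.mem_singleton_iff]
  constructor
  · rintro ⟨j, hj, rfl⟩
    exact ⟨⟨j, by omega, rfl⟩, inj_ne hp (by omega) (by omega) (by omega)⟩
  · rintro ⟨⟨j, hj, rfl⟩, hne⟩
    refine ⟨j, ?_, rfl⟩
    rcases eq_or_ne j N with rfl | h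
    · exact absurd rfl hne
    · omega

lemma shape_finite (n : ℕ) (p : ℕ → ℕ × ℕ) : (shapeYT n p).Finite :=
  Set.Finite.image _ (Set.finite_Iio n)

lemma shape_ncard {n : ℕ} {p : ℕ → ℕ × ℕ} (hp : IsSYT n p) :
    (shapeYT n p).ncard = n := by
  rw [shapeYT, Set.ncard_image_of_injOn hp.1]
  rw [show (Set.Iio n : Set ℕ) = ↑(Finset.Iio n) by simp]
  rw [Set.ncard_coe_finset]
  exact Nat.card_Iio n

lemma p_first {n : ℕ} {p : ℕ → ℕ × ℕ} (hp : IsSYT n p) (hn : 0 < n) : p 0 = (0, 0) := by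
  have h := hp.2 0 hn
    (show ((0,0) : ℕ×ℕ) ≤ p 0 from Prod.le_def.mpr ⟨Nat.zero_le _, Nat.zero_le _⟩)
    (mem_lev le_rfl)
  obtain ⟨j, hj, hje⟩ := h
  have : j = 0 := by omega
  subst this
  exact hje

lemma swap_shape {n k : ℕ} {p : ℕ → ℕ × ℕ} (hk : k + 1 < n) :
    shapeYT n (swapEntries k p) = shapeYT n p := by
  ext x
  simp only [mem_shape]
  constructor
  · rintro ⟨t, ht, rfl⟩
    rcases eq_or_ne t k with h1 | h1
    · exact ⟨k+1, by omega, by rw [h1, swap_self]⟩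
    rcases eq_or_ne t (k+1) with h2 | h2
    · exact ⟨k, by omega, by rw [h2, swap_succ]⟩
    · exact ⟨t, ht, (swap_other p h1 h2).symm⟩
  · rintro ⟨t, ht, rfl⟩
    rcases eq_or_ne t k with h1 | h1
    · exact ⟨k+1, by omega, by rw [swap_succ, h1]⟩
    rcases eq_or_ne t (k+1) with h2 | h2
    · exact ⟨k, by omega, by rw [swap_self, h2]⟩
    · exact ⟨t, ht, swap_other p h1 h2⟩

/-! ### maximal boxes (removable corners) -/

lemma last_max {N : ℕ} {p : ℕ → ℕ × ℕ} (hp : IsSYT (N+1) p) :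
    ∀ w ∈ shapeYT (N+1) p, ¬ p N < w := by
  rintro w hw hlt
  obtain ⟨j, hj, rfl⟩ := mem_shape.mp hw
  rcases eq_or_ne j N with rfl | h
  · exact lt_irrefl _ hlt
  · exact B1 hp (show j < N by omega) (by omega) (le_of_lt hlt)

lemma lower_erase {S : Set (ℕ × ℕ)} (hS : IsLowerSet S) {z : ℕ × ℕ}
    (hz : ∀ w ∈ S, ¬ z < w) : IsLowerSet (S \ {z}) := by
  intro x y hyx hx
  refine ⟨hS hyx hx.1, ?_⟩
  intro hy
  rw [Set.mem_singleton_iff] at hy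
  subst hy
  rcases eq_or_lt_of_le hyx with heq | hlt
  · exact hx.2 (Set.mem_singleton_iff.mpr heq.symm)
  · exact hz x hx.1 hlt

lemma max_pair {S : Set (ℕ × ℕ)} {x y : ℕ × ℕ} (hxS : x ∈ S) (hyS : y ∈ S)
    (hx : ∀ w ∈ S, ¬ x < w) (hy : ∀ w ∈ S, ¬ y < w) (hne : x ≠ y) :
    ¬ x ≤ y ∧ ¬ y ≤ x ∧ x.1 ≠ y.1 := by
  have h1 : ¬ x ≤ y := fun h => hx y hyS (lt_of_le_of_ne h hne)
  have h2 : ¬ y ≤ x := fun h => hy x hxS (lt_of_le_of_ne h hne.symm)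
  refine ⟨h1, h2, ?_⟩
  intro he
  rcases Nat.lt_trichotomy x.2 y.2 with h | h | h
  · exact h1 (Prod.le_def.mpr ⟨le_of_eq he, le_of_lt h⟩)
  · exact hne (Prod.ext_iff.mpr ⟨he, h⟩)
  · exact h2 (Prod.le_def.mpr ⟨le_of_eq he.symm, le_of_lt h⟩)

lemma addable_pair {μ : Set (ℕ × ℕ)} {x y : ℕ × ℕ} (hx : x ∉ μ) (hy : y ∉ μ)
    (hxl : IsLowerSet (μ ∪ {x})) (hyl : IsLowerSet (μ ∪ {y})) (hne : x ≠ y) :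
    x.1 ≠ y.1 := by
  intro he
  rcases Nat.lt_trichotomy x.2 y.2 with h | h | h
  · have := hyl (Prod.le_def.mpr ⟨le_of_eq he, le_of_lt h⟩)
      (Set.mem_union_right μ rfl)
    rcases this with h' | h'
    · exact hx h'
    · exact hne (Set.mem_singleton_iff.mp h')
  · exact hne (Prod.ext_iff.mpr ⟨he, h⟩)
  · have := hxl (Prod.le_def.mpr ⟨le_of_eq he.symm, le_of_lt h⟩)
      (Set.mem_union_right μ rfl)
    rcases this with h' | h'
    · exact hy h'
    · exact hne (Set.mem_singleton_iff.mp h').symm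

/-- The corner lemma: between two addable boxes (in different rows) of a
finite lower set there is a removable box. -/
lemma corner_between {S : Set (ℕ × ℕ)} (hfin : S.Finite) (hlow : IsLowerSet S)
    {x y : ℕ × ℕ} (hx : x ∉ S) (hy : y ∉ S) (hxl : IsLowerSet (S ∪ {x}))
    (hyl : IsLowerSet (S ∪ {y})) (hrow : x.1 < y.1) :
    ∃ z ∈ S, (∀ w ∈ S, ¬ z < w) ∧ z.1 + 1 = y.1 ∧ x.1 ≤ z.1 := by
  have hu : ((y.1 - 1, y.2) : ℕ × ℕ) ∈ S := by
    have hmem : y ∈ S ∪ {y} := Set.mem_union_right S rfl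
    have h := hyl (show ((y.1 - 1, y.2) : ℕ × ℕ) ≤ y from
      Prod.le_def.mpr ⟨by omega, le_rfl⟩) hmem
    rcases h with h | h
    · exact h
    · exfalso
      rw [Set.mem_singleton_iff] at h
      have := congrArg Prod.fst h
      simp at this
      omega
  set M := {w ∈ S | (y.1 - 1, y.2) ≤ w ∧ w.1 < y.1} with hM
  have hMne : M.Nonempty := ⟨(y.1 - 1, y.2), hu, le_rfl, by simp; omega⟩
  have hMfin : M.Finite := hfin.subset (fun w hw => hw.1)
  obtain ⟨z, hzM, hzmax⟩ := Set.Finite.exists_maximalFor id M hMfin hMne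
  have hzrow : z.1 + 1 = y.1 := by
    have h1 := (Prod.le_def.mp hzM.2.1).1
    have h2 := hzM.2.2
    simp at h1
    omega
  refine ⟨z, hzM.1, ?_, hzrow, by omega⟩
  intro w hw hzw
  rcases Nat.lt_or_ge w.1 y.1 with h1 | h1
  · have hwM : w ∈ M := ⟨hw, le_trans hzM.2.1 (le_of_lt hzw), h1⟩
    exact absurd (le_antisymm (le_of_lt hzw) (hzmax hwM (le_of_lt hzw))) (ne_of_lt hzw)
  · apply hy
    apply hlow (show y ≤ w from ?_) hw
    refine Prod.le_def.mpr ⟨h1, ?_⟩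
    have h2 := (Prod.le_def.mp hzM.2.1).2
    have h3 := (Prod.le_def.mp (le_of_lt hzw)).2
    simp at h2
    omega

/-! ### existence of an SYT of any shape -/

lemma exists_syt : ∀ (k : ℕ) (S : Set (ℕ × ℕ)), S.Finite → S.ncard = k →
    IsLowerSet S → ∃ q, IsSYT k q ∧ shapeYT k q = S := by
  intro k
  induction k with
  | zero =>
    intro S hfin hcard _
    refine ⟨fun _ => (0,0), ⟨?_, ?_⟩, ?_⟩
    · intro a ha
      exact absurd (Set.mem_Iio.mp ha) (Nat.not_lt_zero a)
    · intro t ht; omega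
    · rw [shape_zero]
      exact ((Set.ncard_eq_zero hfin).mp hcard).symm
  | succ k ih =>
    intro S hfin hcard hlow
    have hne : S.Nonempty := (Set.ncard_pos hfin).mp (by omega)
    obtain ⟨z, hzS, hzmax⟩ := Set.Finite.exists_maximalFor id S hfin hne
    have hzmax' : ∀ w ∈ S, ¬ z < w :=
      fun w hw hlt => (ne_of_lt hlt) (le_antisymm (le_of_lt hlt) (hzmax hw (le_of_lt hlt)))
    have hlow' : IsLowerSet (S \ {z}) := lower_erase hlow hzmax'
    have hfin' : (S \ {z}).Finite := hfin.subset Set.diff_subset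
    have hcard' : (S \ {z}).ncard = k := by
      rw [Set.ncard_diff_singleton_of_mem hzS]
      omega
    obtain ⟨q, hq, hqs⟩ := ih (S \ {z}) hfin' hcard' hlow'
    refine ⟨fun t => if t = k then z else q t, ⟨?_, ?_⟩, ?_⟩
    · intro a ha b hb hab
      have ha' := Set.mem_Iio.mp ha
      have hb' := Set.mem_Iio.mp hb
      simp only at hab
      by_cases h1 : a = k
      · by_cases h2 : b = k
        · omega
        · exfalso
          rw [if_pos h1, if_neg h2] at hab
          have hm : q b ∈ shapeYT k q := mem_shape.mpr ⟨b, by omega, rfl⟩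
          rw [hqs] at hm
          exact hm.2 (Set.mem_singleton_iff.mpr hab.symm)
      · by_cases h2 : b = k
        · exfalso
          rw [if_neg h1, if_pos h2] at hab
          have hm : q a ∈ shapeYT k q := mem_shape.mpr ⟨a, by omega, rfl⟩
          rw [hqs] at hm
          exact hm.2 (Set.mem_singleton_iff.mpr hab)
        · rw [if_neg h1, if_neg h2] at hab
          exact hq.1 (Set.mem_Iio.mpr (show a < k by omega))
            (Set.mem_Iio.mpr (show b < k by omega)) hab
    · intro t ht
      rcases Nat.lt_or_ge t k with h | h
      · have hset : {w : ℕ × ℕ | ∃ j ≤ t, (if j = k then z else q j) = w} = Lev q t := by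
          ext w
          constructor
          · rintro ⟨j, hj, rfl⟩
            rw [if_neg (by omega)]
            exact ⟨j, hj, rfl⟩
          · rintro ⟨j, hj, rfl⟩
            exact ⟨j, hj, by rw [if_neg (by omega)]⟩
        rw [hset]
        exact hq.2 t h
      · have ht' : t = k := by omega
        have hset : {w : ℕ × ℕ | ∃ j ≤ t, (if j = k then z else q j) = w} = S := by
          ext w
          constructor
          · rintro ⟨j, hj, rfl⟩
            by_cases hjk : j = k
            · rw [if_pos hjk]; exact hzS
            · rw [if_neg hjk]
              have hm : q j ∈ shapeYT k q := mem_shape.mpr ⟨j, by omega, rfl⟩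
              rw [hqs] at hm
              exact hm.1
          · intro hw
            by_cases hwz : w = z
            · exact ⟨k, by omega, by rw [if_pos rfl, hwz]⟩
            · have hm : w ∈ shapeYT k q := by
                rw [hqs]
                exact ⟨hw, fun hmem => hwz (Set.mem_singleton_iff.mp hmem)⟩
              obtain ⟨j, hj, rfl⟩ := mem_shape.mp hm
              exact ⟨j, by omega, by rw [if_neg (by omega)]⟩
        rw [hset]
        exact hlow
    · rw [shape_succ]
      have h1 : shapeYT k (fun t => if t = k then z else q t) = shapeYT k q :=
        shape_congr (fun t ht => by rw [if_neg (by omega)])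
      rw [h1, hqs]
      have hz' : (if k = k then z else q k) = z := if_pos rfl
      rw [show ({if k = k then z else q k} : Set (ℕ × ℕ)) = {z} by rw [hz']]
      rw [Set.diff_union_self]
      exact Set.union_eq_self_of_subset_right (Set.singleton_subset_iff.mpr hzS)

/-! ### extending an SYT by one box -/

lemma extend_syt {k : ℕ} {S : Set (ℕ × ℕ)} {q : ℕ → ℕ × ℕ} (hq : IsSYT k q)
    (hqs : shapeYT k q = S) {z : ℕ × ℕ} (hz : z ∉ S) (hlow : IsLowerSet (S ∪ {z})) :
    IsSYT (k+1) (fun t => if t = k then z else q t) ∧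
      shapeYT (k+1) (fun t => if t = k then z else q t) = S ∪ {z} := by
  have hmemS : ∀ j, j < k → q j ∈ S := by
    intro j hj
    rw [← hqs]
    exact mem_shape.mpr ⟨j, hj, rfl⟩
  refine ⟨⟨?_, ?_⟩, ?_⟩
  · intro a ha b hb hab
    have ha' := Set.mem_Iio.mp ha
    have hb' := Set.mem_Iio.mp hb
    simp only at hab
    by_cases h1 : a = k
    · by_cases h2 : b = k
      · omega
      · exfalso
        rw [if_pos h1, if_neg h2] at hab
        exact hz (hab ▸ hmemS b (by omega))
    · by_cases h2 : b = k
      · exfalso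
        rw [if_neg h1, if_pos h2] at hab
        exact hz (hab ▸ hmemS a (by omega))
      · rw [if_neg h1, if_neg h2] at hab
        exact hq.1 (Set.mem_Iio.mpr (show a < k by omega))
          (Set.mem_Iio.mpr (show b < k by omega)) hab
  · intro t ht
    rcases Nat.lt_or_ge t k with h | h
    · have hset : {w : ℕ × ℕ | ∃ j ≤ t, (if j = k then z else q j) = w} = Lev q t := by
        ext w
        constructor
        · rintro ⟨j, hj, rfl⟩
          rw [if_neg (by omega)]
          exact ⟨j, hj, rfl⟩
        · rintro ⟨j, hj, rfl⟩
          exact ⟨j, hj, by rw [if_neg (by omega)]⟩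
      rw [hset]
      exact hq.2 t h
    · have ht' : t = k := by omega
      have hset : {w : ℕ × ℕ | ∃ j ≤ t, (if j = k then z else q j) = w} = S ∪ {z} := by
        ext w
        constructor
        · rintro ⟨j, hj, rfl⟩
          by_cases hjk : j = k
          · rw [if_pos hjk]; exact Or.inr rfl
          · rw [if_neg hjk]
            exact Or.inl (hmemS j (by omega))
        · rintro (hw | hw)
          · have hm : w ∈ shapeYT k q := by rw [hqs]; exact hw
            obtain ⟨j, hj, rfl⟩ := mem_shape.mp hm
            exact ⟨j, by omega, by rw [if_neg (by omega)]⟩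
          · rw [Set.mem_singleton_iff] at hw
            exact ⟨k, by omega, by rw [if_pos rfl]; exact hw.symm⟩
      rw [hset]
      exact hlow
  · rw [shape_succ]
    have h1 : shapeYT k (fun t => if t = k then z else q t) = shapeYT k q :=
      shape_congr (fun t ht => by rw [if_neg (by omega)])
    rw [h1, hqs]
    have hz' : (if k = k then z else q k) = z := if_pos rfl
    rw [hz']

lemma chain_shape {n : ℕ} : ∀ (L : List (ℕ × ℕ)) {p : ℕ → ℕ × ℕ},
    ChainDefined n L p → shapeYT n (applySeq n L p) = shapeYT n p := by
  intro L
  induction L with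
  | nil => intro p _; rfl
  | cons ij L ih =>
    intro p hC
    rw [applySeq_cons, ih hC.2.2.2.2]
    rcases fYT_cases n ij.1 ij.2 p with h | h
    · rw [h, swap_shape hC.2.1]
    · rw [h, swap_shape hC.2.2.1]

/-! ### connectivity: any two SYT of the same shape are linked by a chain -/

lemma conn : ∀ (n : ℕ) (T T' : ℕ → ℕ × ℕ), IsSYT n T → IsSYT n T' →
    shapeYT n T = shapeYT n T' →
    ∃ L, ChainDefined n L T ∧ ∀ k < n, applySeq n L T k = T' k := by
  intro n
  induction n using Nat.strong_induction_on with
  | _ n IH =>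
  rcases n with _ | N
  · intro T T' _ _ _
    exact ⟨[], trivial, fun k hk => absurd hk (by omega)⟩
  intro T T' hT hT' hsh
  by_cases hcc : T N = T' N
  · -- same last box : recurse directly
    have hshN : shapeYT N T = shapeYT N T' := by
      rw [shape_pred hT, shape_pred hT', hsh, hcc]
    obtain ⟨L, hC, hval⟩ := IH N (by omega) T T'
      (isSYT_mono hT (by omega)) (isSYT_mono hT' (by omega)) hshN
    obtain ⟨hC', heq, hN⟩ := lift_chain L hT hC
    refine ⟨L, hC', fun k hk => ?_⟩
    rcases Nat.lt_or_ge k N with h | h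
    · rw [heq]; exact hval k h
    · have hkN : k = N := by omega
      subst hkN
      rw [hN, hcc]
  · -- different last boxes
    have hN2 : 2 ≤ N := by
      by_contra hlt
      push_neg at hlt
      interval_cases N
      · apply hcc
        have h1 : T 0 ∈ shapeYT 1 T' := by
          rw [← hsh]; exact mem_shape.mpr ⟨0, by omega, rfl⟩
        obtain ⟨j, hj, hje⟩ := mem_shape.mp h1
        have hj0 : j = 0 := by omega
        rw [← hje, hj0]
      · apply hcc
        have h0 : T 0 = T' 0 := by
          rw [p_first hT (by omega), p_first hT' (by omega)]
        have h1 : T 1 ∈ shapeYT 2 T' := by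
          rw [← hsh]; exact mem_shape.mpr ⟨1, by omega, rfl⟩
        obtain ⟨j, hj, hje⟩ := mem_shape.mp h1
        rcases (show j = 0 ∨ j = 1 by omega) with rfl | rfl
        · exfalso
          exact inj_ne hT (show (0:ℕ) < 2 by omega) (show (1:ℕ) < 2 by omega)
            (by omega) (by rw [h0, hje])
        · exact hje.symm
    obtain ⟨K, rfl⟩ : ∃ K, N = K + 2 := ⟨N - 2, by omega⟩
    have hc0mem : T (K+2) ∈ shapeYT (K+3) T := mem_shape.mpr ⟨K+2, by omega, rfl⟩
    have hc1mem : T' (K+2) ∈ shapeYT (K+3) T := by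
      rw [hsh]; exact mem_shape.mpr ⟨K+2, by omega, rfl⟩
    have hc0max : ∀ w ∈ shapeYT (K+3) T, ¬ T (K+2) < w := last_max hT
    have hc1max : ∀ w ∈ shapeYT (K+3) T, ¬ T' (K+2) < w := by
      rw [hsh]; exact last_max hT'
    have hfin : (shapeYT (K+3) T).Finite := shape_finite _ _
    have hlow : IsLowerSet (shapeYT (K+3) T) := shape_lower hT
    obtain ⟨hn01, hn10, hrne⟩ := max_pair hc0mem hc1mem hc0max hc1max hcc
    have hmu1low : IsLowerSet ((shapeYT (K+3) T \ {T (K+2)}) \ {T' (K+2)}) := by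
      apply lower_erase (lower_erase hlow hc0max)
      intro w hw
      exact hc1max w hw.1
    have hx1 : T (K+2) ∉ (shapeYT (K+3) T \ {T (K+2)}) \ {T' (K+2)} :=
      fun h => h.1.2 rfl
    have hy1 : T' (K+2) ∉ (shapeYT (K+3) T \ {T (K+2)}) \ {T' (K+2)} :=
      fun h => h.2 rfl
    have hu1 : ((shapeYT (K+3) T \ {T (K+2)}) \ {T' (K+2)}) ∪ {T (K+2)} =
        shapeYT (K+3) T \ {T' (K+2)} := by
      ext w
      simp only [Set.mem_union, Set.mem_diff, Set.mem_singleton_iff]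
      constructor
      · rintro (⟨⟨h1, h2⟩, h3⟩ | rfl)
        · exact ⟨h1, h3⟩
        · exact ⟨hc0mem, fun he => hcc he⟩
      · rintro ⟨h1, h2⟩
        by_cases h3 : w = T (K+2)
        · right; exact h3
        · left; exact ⟨⟨h1, h3⟩, h2⟩
    have hu2 : ((shapeYT (K+3) T \ {T (K+2)}) \ {T' (K+2)}) ∪ {T' (K+2)} =
        shapeYT (K+3) T \ {T (K+2)} := by
      ext w
      simp only [Set.mem_union, Set.mem_diff, Set.mem_singleton_iff]
      constructor
      · rintro (⟨⟨h1, h2⟩, h3⟩ | rfl)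
        · exact ⟨h1, h2⟩
        · exact ⟨hc1mem, fun he => hcc he.symm⟩
      · rintro ⟨h1, h2⟩
        by_cases h3 : w = T' (K+2)
        · right; exact h3
        · left; exact ⟨⟨h1, h2⟩, h3⟩
    have hl1 : IsLowerSet (((shapeYT (K+3) T \ {T (K+2)}) \ {T' (K+2)}) ∪ {T (K+2)}) := by
      rw [hu1]; exact lower_erase hlow hc1max
    have hl2 : IsLowerSet (((shapeYT (K+3) T \ {T (K+2)}) \ {T' (K+2)}) ∪ {T' (K+2)}) := by
      rw [hu2]; exact lower_erase hlow hc0max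
    have hmu1fin : ((shapeYT (K+3) T \ {T (K+2)}) \ {T' (K+2)}).Finite :=
      hfin.subset (fun w hw => hw.1.1)
    -- get the pivot box e
    have hkey : ∃ e ∈ (shapeYT (K+3) T \ {T (K+2)}) \ {T' (K+2)},
        (∀ w ∈ (shapeYT (K+3) T \ {T (K+2)}) \ {T' (K+2)}, ¬ e < w) ∧
        ((T (K+2)).1 < (T' (K+2)).1 → (e.1 + 1 = (T' (K+2)).1 ∧ (T (K+2)).1 ≤ e.1)) ∧
        ((T' (K+2)).1 < (T (K+2)).1 → (e.1 + 1 = (T (K+2)).1 ∧ (T' (K+2)).1 ≤ e.1)) := by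
      rcases Nat.lt_or_ge (T (K+2)).1 (T' (K+2)).1 with hr | hr
      · obtain ⟨e, he1, he2, he3, he4⟩ :=
          corner_between hmu1fin hmu1low hx1 hy1 hl1 hl2 hr
        exact ⟨e, he1, he2, fun _ => ⟨he3, he4⟩, fun h => by omega⟩
      · have hr' : (T' (K+2)).1 < (T (K+2)).1 := by omega
        obtain ⟨e, he1, he2, he3, he4⟩ :=
          corner_between hmu1fin hmu1low hy1 hx1 hl2 hl1 hr'
        exact ⟨e, he1, he2, fun h => by omega, fun _ => ⟨he3, he4⟩⟩
    obtain ⟨e, hemem, hemax, heA, heB⟩ := hkey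
    -- cardinalities
    have hlamcard : (shapeYT (K+3) T).ncard = K+3 := shape_ncard hT
    have hcard1 : (shapeYT (K+3) T \ {T (K+2)}).ncard = K+2 := by
      rw [Set.ncard_diff_singleton_of_mem hc0mem, hlamcard]
      omega
    have hfin1 : (shapeYT (K+3) T \ {T (K+2)}).Finite := hfin.subset Set.diff_subset
    have hc1mem' : T' (K+2) ∈ shapeYT (K+3) T \ {T (K+2)} :=
      ⟨hc1mem, fun he => hcc (Set.mem_singleton_iff.mp he).symm⟩
    have hcard2 : ((shapeYT (K+3) T \ {T (K+2)}) \ {T' (K+2)}).ncard = K+1 := by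
      rw [Set.ncard_diff_singleton_of_mem hc1mem', hcard1]
      omega
    have hcard3 : (((shapeYT (K+3) T \ {T (K+2)}) \ {T' (K+2)}) \ {e}).ncard = K := by
      rw [Set.ncard_diff_singleton_of_mem hemem, hcard2]
      omega
    -- build V
    obtain ⟨W, hW, hWs⟩ := exists_syt K _ (hmu1fin.subset Set.diff_subset) hcard3
      (lower_erase hmu1low hemax)
    have hmu2e : (((shapeYT (K+3) T \ {T (K+2)}) \ {T' (K+2)}) \ {e}) ∪ {e} =
        (shapeYT (K+3) T \ {T (K+2)}) \ {T' (K+2)} := by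
      rw [Set.diff_union_self]
      exact Set.union_eq_self_of_subset_right (Set.singleton_subset_iff.mpr hemem)
    obtain ⟨hW1, hW1s⟩ := extend_syt hW hWs (z := e) (fun h => h.2 rfl)
      (by rw [hmu2e]; exact hmu1low)
    rw [hmu2e] at hW1s
    obtain ⟨hV, hVs⟩ := extend_syt hW1 hW1s (z := T' (K+2)) hy1 hl2
    rw [hu2] at hVs
    -- connect T's restriction to V
    have hTshape : shapeYT (K+2) T = shapeYT (K+3) T \ {T (K+2)} := shape_pred hT
    obtain ⟨L1, hC1, hv1⟩ := IH (K+2) (by omega) T _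
      (isSYT_mono hT (by omega)) hV (by rw [hTshape, hVs])
    obtain ⟨hC1', heq1, hN1⟩ := lift_chain L1 hT hC1
    have hp1syt : IsSYT (K+3) (applySeq (K+3) L1 T) := chain_syt L1 hC1' hT
    have hp1K : applySeq (K+3) L1 T K = e := by
      rw [heq1, hv1 K (by omega)]
      show (if K = K + 1 then T' (K+2) else if K = K then e else W K) = e
      rw [if_neg (show ¬ K = K + 1 by omega), if_pos rfl]
    have hp1K1 : applySeq (K+3) L1 T (K+1) = T' (K+2) := by
      rw [heq1, hv1 (K+1) (by omega)]
      show (if K + 1 = K + 1 then T' (K+2) else if K + 1 = K then e else W (K+1))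
        = T' (K+2)
      rw [if_pos rfl]
    have hp1N : applySeq (K+3) L1 T (K+2) = T (K+2) := hN1
    -- the relocation move
    obtain ⟨ipair, hadj, hib, hjb, hstepD, hfeq⟩ :
        ∃ ij : ℕ × ℕ, Adjacent ij.1 ij.2 ∧ ij.1 + 1 < K+3 ∧ ij.2 + 1 < K+3 ∧
          DYT (K+3) ij.1 ij.2 (applySeq (K+3) L1 T) ∧
          fYT (K+3) ij.1 ij.2 (applySeq (K+3) L1 T) =
            swapEntries (K+1) (applySeq (K+3) L1 T) := by
      rcases Nat.lt_or_ge (T (K+2)).1 (T' (K+2)).1 with hr | hr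
      · obtain ⟨he3, he4⟩ := heA hr
        have h := ML1 (i := K) hp1syt (by omega)
          (by rw [hp1K, hp1K1]; omega)
          (by rw [hp1K1]; rw [hp1N]; omega)
        refine ⟨(K, K+1), Or.inr rfl, by omega, by omega, ?_, ?_⟩
        · refine ⟨hp1syt, ⟨by omega, by rw [hp1K, hp1K1]; omega⟩, ?_⟩
          rintro ⟨-, hlt⟩
          rw [hp1K1, pcast (applySeq (K+3) L1 T) K, hp1N] at hlt
          omega
        · exact h.2 (by rw [hp1K, hp1N]; omega)
      · have hr' : (T' (K+2)).1 < (T (K+2)).1 := by omega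
        obtain ⟨he3, he4⟩ := heB hr'
        have h := ML2 (j := K) hp1syt (by omega)
          (by rw [hp1K1, hp1N]; omega)
          (by rw [hp1K, hp1K1]; omega)
        refine ⟨(K+1, K), Or.inl rfl, by omega, by omega, ?_, ?_⟩
        · refine ⟨hp1syt, ⟨by omega, by
            rw [hp1K1, pcast (applySeq (K+3) L1 T) K, hp1N]; omega⟩, ?_⟩
          rintro ⟨-, hlt⟩
          rw [hp1K, hp1K1] at hlt
          omega
        · exact h.2 (by rw [hp1K1, hp1N]; exact hn10) (by rw [hp1K, hp1N]; omega)
    -- after the move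
    have hD2 : DYT (K+3) ipair.2 ipair.1 (swapEntries (K+1) (applySeq (K+3) L1 T)) := by
      rw [← hfeq]; exact move_lemma hadj hib hjb hstepD
    have hp2syt : IsSYT (K+3) (swapEntries (K+1) (applySeq (K+3) L1 T)) := hD2.1
    have hp2K2 : swapEntries (K+1) (applySeq (K+3) L1 T) (K+2) = T' (K+2) := by
      rw [← pcast (swapEntries (K+1) (applySeq (K+3) L1 T)) K, swap_succ, hp1K1]
    have hshp2 : shapeYT (K+2) (swapEntries (K+1) (applySeq (K+3) L1 T)) =
        shapeYT (K+2) T' := by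
      rw [shape_pred hp2syt, shape_pred hT', hp2K2]
      have hsh3 : shapeYT (K+3) (swapEntries (K+1) (applySeq (K+3) L1 T)) =
          shapeYT (K+3) T' := by
        rw [swap_shape (show K+1+1 < K+3 by omega), chain_shape L1 hC1', hsh]
      rw [hsh3]
    obtain ⟨L2, hC2, hv2⟩ := IH (K+2) (by omega) _ T'
      (isSYT_mono hp2syt (by omega)) (isSYT_mono hT' (by omega)) hshp2
    obtain ⟨hC2', heq2, hN2⟩ := lift_chain L2 hp2syt hC2
    refine ⟨L1 ++ ipair :: L2, ?_, ?_⟩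
    · apply chain_append L1 hC1'
      exact ⟨hadj, hib, hjb, hstepD, by rw [hfeq]; exact hC2'⟩
    · intro k hk
      rw [applySeq_append]
      show applySeq (K+3) L2 (fYT (K+3) ipair.1 ipair.2 (applySeq (K+3) L1 T)) k = T' k
      rw [hfeq]
      rcases Nat.lt_or_ge k (K+2) with h | h
      · rw [heq2]; exact hv2 k h
      · have hkK : k = K+2 := by omega
        subst hkK
        rw [hN2, hp2K2]

/-! ### the final contradiction step -/

lemma final_step {N : ℕ} {p p' : ℕ → ℕ × ℕ} (hp : IsSYT (N+1) p) (hp' : IsSYT (N+1) p')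
    (hagree : ∀ j, j < N → p j = p' j) (hlt : (p N).1 < (p' N).1)
    (hall : ∀ m, approxYT (N+1) m p p') : False := by
  have hμ' : shapeYT N p = shapeYT N p' := shape_congr hagree
  have hfin : (shapeYT N p).Finite := shape_finite _ _
  have hlowμ : IsLowerSet (shapeYT N p) := shape_lower (isSYT_mono hp (by omega))
  have hxA : p N ∉ shapeYT N p := by
    intro h
    obtain ⟨j, hj, hje⟩ := mem_shape.mp h
    exact inj_ne hp (show j < N+1 by omega) (by omega) (by omega) hje
  have hxB : p' N ∉ shapeYT N p := by
    rw [hμ']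
    intro h
    obtain ⟨j, hj, hje⟩ := mem_shape.mp h
    exact inj_ne hp' (show j < N+1 by omega) (by omega) (by omega) hje
  have hlA : IsLowerSet (shapeYT N p ∪ {p N}) := by
    rw [show shapeYT N p ∪ {p N} = shapeYT (N+1) p from (shape_succ N p).symm]
    exact shape_lower hp
  have hlB : IsLowerSet (shapeYT N p ∪ {p' N}) := by
    rw [hμ', show shapeYT N p' ∪ {p' N} = shapeYT (N+1) p' from (shape_succ N p').symm]
    exact shape_lower hp'
  obtain ⟨z, hzmem, hzmax, hzrow, hzrow2⟩ :=
    corner_between hfin hlowμ hxA hxB hlA hlB hlt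
  have hN1 : 1 ≤ N := by
    by_contra h
    push_neg at h
    interval_cases N
    · rw [shape_zero] at hzmem
      exact hzmem
  obtain ⟨M, rfl⟩ : ∃ M, N = M + 1 := ⟨N - 1, by omega⟩
  have hcardz : ((shapeYT (M+1) p) \ {z}).ncard = M := by
    rw [Set.ncard_diff_singleton_of_mem hzmem,
      shape_ncard (isSYT_mono hp (by omega))]
    omega
  obtain ⟨W, hW, hWs⟩ := exists_syt M _ (hfin.subset Set.diff_subset) hcardz
    (lower_erase hlowμ hzmax)
  have hze : ((shapeYT (M+1) p \ {z}) ∪ {z}) = shapeYT (M+1) p := by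
    rw [Set.diff_union_self]
    exact Set.union_eq_self_of_subset_right (Set.singleton_subset_iff.mpr hzmem)
  obtain ⟨hV, hVs⟩ := extend_syt hW hWs (z := z) (fun h => h.2 rfl)
    (by rw [hze]; exact hlowμ)
  rw [hze] at hVs
  obtain ⟨L1, hC1, hv1⟩ := conn (M+1) p _ (isSYT_mono hp (by omega)) hV hVs.symm
  obtain ⟨hC1', heq1, hN1'⟩ := lift_chain L1 hp hC1
  have hbounds := chain_bounds L1 hC1
  obtain ⟨hC1p', hvals, hNq, hNq'⟩ := parallel L1 hp hp' hagree hbounds hC1'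
  have happrox := transfer L1 0 hC1' hC1p' (hall (L1.length + 0))
  have htaueq : tauYT (M+2) (applySeq (M+2) L1 p) = tauYT (M+2) (applySeq (M+2) L1 p') :=
    happrox
  have hqM : applySeq (M+2) L1 p M = z := by
    rw [heq1, hv1 M (by omega)]
    show (if M = M then z else W M) = z
    rw [if_pos rfl]
  have hq'M : applySeq (M+2) L1 p' M = z := by
    rw [← hvals M (by omega), hqM]
  have h1 : M ∈ tauYT (M+2) (applySeq (M+2) L1 p') := by
    refine ⟨by omega, ?_⟩
    rw [hq'M, hNq']
    omega
  have h2 : M ∉ tauYT (M+2) (applySeq (M+2) L1 p) := by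
    rintro ⟨-, hlt2⟩
    rw [hqM, hNq] at hlt2
    omega
  rw [htaueq] at h2
  exact h2 h1

/-! ### main theorem -/

lemma main : ∀ (n : ℕ) (p p' : ℕ → ℕ × ℕ), IsSYT n p → IsSYT n p' →
    shapeYT n p ≠ shapeYT n p' → ∃ m, ¬ approxYT n m p p' := by
  intro n
  induction n using Nat.strong_induction_on with
  | _ n IH =>
  rcases n with _ | N
  · intro p p' _ _ hne
    exact absurd ((shape_zero p).trans (shape_zero p').symm) hne
  intro p p' hp hp' hne
  by_contra hcon
  push_neg at hcon
  have hagree : ∀ j, j < N → p j = p' j := by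
    have hsh : ∀ k, k ≤ N → shapeYT k p = shapeYT k p' := by
      intro k hk
      by_contra hshne
      obtain ⟨m, hm⟩ := IH k (by omega) p p' (isSYT_mono hp (by omega))
        (isSYT_mono hp' (by omega)) hshne
      exact hm (approx_down (N+1) k (by omega) hp hp' hcon m)
    intro j hj
    have h1 := hsh (j+1) (by omega)
    have h2 := hsh j (by omega)
    have hpj : p j ∈ shapeYT (j+1) p' := by
      rw [← h1]
      exact mem_shape.mpr ⟨j, by omega, rfl⟩
    obtain ⟨t, ht, hte⟩ := mem_shape.mp hpj
    rcases eq_or_ne t j with rfl | htj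
    · exact hte.symm
    · exfalso
      have hm : p j ∈ shapeYT j p := by
        rw [h2]
        exact mem_shape.mpr ⟨t, by omega, hte⟩
      obtain ⟨s, hs, hse⟩ := mem_shape.mp hm
      exact inj_ne hp (show s < N+1 by omega) (show j < N+1 by omega) (by omega) hse
  have hμ : shapeYT N p = shapeYT N p' := shape_congr hagree
  have hAB : p N ≠ p' N := by
    intro he
    apply hne
    rw [shape_succ, shape_succ, hμ, he]
  have hxA : p N ∉ shapeYT N p := by
    intro h
    obtain ⟨j, hj, hje⟩ := mem_shape.mp h
    exact inj_ne hp (show j < N+1 by omega) (by omega) (by omega) hje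
  have hxB : p' N ∉ shapeYT N p := by
    rw [hμ]
    intro h
    obtain ⟨j, hj, hje⟩ := mem_shape.mp h
    exact inj_ne hp' (show j < N+1 by omega) (by omega) (by omega) hje
  have hlA : IsLowerSet (shapeYT N p ∪ {p N}) := by
    rw [show shapeYT N p ∪ {p N} = shapeYT (N+1) p from (shape_succ N p).symm]
    exact shape_lower hp
  have hlB : IsLowerSet (shapeYT N p ∪ {p' N}) := by
    rw [hμ, show shapeYT N p' ∪ {p' N} = shapeYT (N+1) p' from (shape_succ N p').symm]
    exact shape_lower hp'
  have hrne : (p N).1 ≠ (p' N).1 := addable_pair hxA hxB hlA hlB hAB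
  rcases Nat.lt_or_ge (p N).1 (p' N).1 with hr | hr
  · exact final_step hp hp' hagree hr hcon
  · have hr' : (p' N).1 < (p N).1 := by omega
    exact final_step hp' hp (fun j hj => (hagree j hj).symm) hr'
      (fun m => approx_symm m (hcon m))

end Stmt6Aux

/-- Standard Young tableaux with `n` boxes of different shapes
have different generalized τ-invariants. -/
theorem stmt6 (n : ℕ) (p p' : ℕ → ℕ × ℕ) (hp : IsSYT n p) (hp' : IsSYT n p')
    (hne : shapeYT n p ≠ shapeYT n p') :
    ∃ m : ℕ, ¬ approxYT n m p p' := by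
  exact Stmt6Aux.main n p p' hp hp' hne
end

section
/- (Vogan) If Y and Y' are standard Young tableaux with n boxes and τ_g(Y) = τ_g(Y') (i.e., Y ≈_m Y' for all m ≥ 0), then Y = Y'. -/
namespace Vogan

open Set

/-- The set of positions of the first `k` entries. -/
def preYT (p : ℕ → ℕ × ℕ) (k : ℕ) : Set (ℕ × ℕ) := {q | ∃ j < k, p j = q}

/-- `p` and `q` agree on entries below `m`. -/
def EqB (m : ℕ) (p q : ℕ → ℕ × ℕ) : Prop := ∀ k < m, p k = q k

lemma preYT_zero (p : ℕ → ℕ × ℕ) : preYT p 0 = ∅ := by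
  ext q; simp [preYT]

lemma preYT_succ (p : ℕ → ℕ × ℕ) (k : ℕ) : preYT p (k + 1) = preYT p k ∪ {p k} := by
  ext q
  simp only [preYT, Nat.lt_succ_iff, Set.mem_union, Set.mem_setOf_eq, Set.mem_singleton_iff]
  constructor
  · rintro ⟨j, hj, rfl⟩
    rcases Nat.lt_or_ge j k with h | h
    · exact Or.inl ⟨j, h, rfl⟩
    · exact Or.inr (by rw [Nat.le_antisymm hj h])
  · rintro (⟨j, hj, rfl⟩ | rfl)
    · exact ⟨j, Nat.le_of_lt hj, rfl⟩
    · exact ⟨k, le_rfl, rfl⟩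

lemma mem_preYT_self {p : ℕ → ℕ × ℕ} {j k : ℕ} (h : j < k) : p j ∈ preYT p k := ⟨j, h, rfl⟩

lemma preYT_lower {n : ℕ} {p : ℕ → ℕ × ℕ} (hp : IsSYT n p) {k : ℕ} (hk : k ≤ n) :
    IsLowerSet (preYT p k) := by
  cases k with
  | zero => rw [preYT_zero]; exact isLowerSet_empty
  | succ t =>
    have := hp.2 t hk
    convert this using 1
    ext q
    simp only [preYT, Set.mem_setOf_eq, Nat.lt_succ_iff]

lemma p_ne {n : ℕ} {p : ℕ → ℕ × ℕ} (hp : IsSYT n p) {a b : ℕ} (ha : a < n) (hb : b < n)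
    (hab : a ≠ b) : p a ≠ p b := fun h => hab (hp.1 ha hb h)

lemma self_not_mem_preYT {n : ℕ} {p : ℕ → ℕ × ℕ} (hp : IsSYT n p) {k t : ℕ} (hk : k < n)
    (ht : t ≤ k) : p k ∉ preYT p t := by
  rintro ⟨j, hj, hjk⟩
  exact absurd (hp.1 (lt_of_lt_of_le (lt_of_lt_of_le hj ht) (le_of_lt hk)) hk hjk)
    (Nat.ne_of_lt (lt_of_lt_of_le hj ht))

/-- Key step: anything strictly below the `k`-th position is among the earlier positions. -/
lemma lower_step {n : ℕ} {p : ℕ → ℕ × ℕ} (hp : IsSYT n p) {k : ℕ} (hk : k < n)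
    {q : ℕ × ℕ} (hq : q ≤ p k) (hne : q ≠ p k) : q ∈ preYT p k := by
  have h1 : p k ∈ preYT p (k + 1) := mem_preYT_self (Nat.lt_succ_self k)
  have h2 : q ∈ preYT p (k + 1) := preYT_lower hp hk hq h1
  rw [preYT_succ] at h2
  rcases h2 with h2 | h2
  · exact h2
  · exact absurd h2 hne

lemma p_zero {n : ℕ} {p : ℕ → ℕ × ℕ} (hp : IsSYT n p) (hn : 0 < n) : p 0 = (0, 0) := by
  by_contra hne
  have h0 : (0, 0) ≤ p 0 := by simp [Prod.le_def]
  have : ((0 : ℕ), (0 : ℕ)) ∈ preYT p 0 := lower_step hp hn h0 (fun h => hne h.symm)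
  rw [preYT_zero] at this
  exact this

end Vogan

namespace Vogan

open Set

lemma swapEntries_left (p : ℕ → ℕ × ℕ) (i : ℕ) : swapEntries i p i = p (i + 1) := by
  simp [swapEntries, Equiv.swap_apply_left]

lemma swapEntries_right (p : ℕ → ℕ × ℕ) (i : ℕ) : swapEntries i p (i + 1) = p i := by
  simp [swapEntries, Equiv.swap_apply_right]

lemma swapEntries_other (p : ℕ → ℕ × ℕ) {i t : ℕ} (h1 : t ≠ i) (h2 : t ≠ i + 1) :
    swapEntries i p t = p t := by
  simp [swapEntries, Equiv.swap_apply_of_ne_of_ne h1 h2]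

lemma preYT_swapEntries_le {p : ℕ → ℕ × ℕ} {i t : ℕ} (h : t ≤ i) :
    preYT (swapEntries i p) t = preYT p t := by
  ext q
  simp only [preYT, Set.mem_setOf_eq]
  constructor
  · rintro ⟨j, hj, rfl⟩
    exact ⟨j, hj, (swapEntries_other p (Nat.ne_of_lt (lt_of_lt_of_le hj h))
      (Nat.ne_of_lt (lt_of_lt_of_le hj (le_trans h (Nat.le_succ i))))).symm⟩
  · rintro ⟨j, hj, rfl⟩
    exact ⟨j, hj, swapEntries_other p (Nat.ne_of_lt (lt_of_lt_of_le hj h))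
      (Nat.ne_of_lt (lt_of_lt_of_le hj (le_trans h (Nat.le_succ i))))⟩

lemma preYT_swapEntries_ge {p : ℕ → ℕ × ℕ} {i t : ℕ} (h : i + 2 ≤ t) :
    preYT (swapEntries i p) t = preYT p t := by
  have hi : i < t := lt_of_lt_of_le (Nat.lt_of_lt_of_le (Nat.lt_succ_self i) (Nat.le_succ _)) h
  have hi1 : i + 1 < t := lt_of_lt_of_le (Nat.lt_succ_self (i + 1)) h
  ext q
  simp only [preYT, Set.mem_setOf_eq]
  constructor
  · rintro ⟨j, hj, rfl⟩
    refine ⟨Equiv.swap i (i + 1) j, ?_, rfl⟩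
    rcases eq_or_ne j i with rfl | hji
    · rw [Equiv.swap_apply_left]; exact hi1
    rcases eq_or_ne j (i + 1) with rfl | hji1
    · rw [Equiv.swap_apply_right]; exact hi
    · rw [Equiv.swap_apply_of_ne_of_ne hji hji1]; exact hj
  · rintro ⟨j, hj, rfl⟩
    refine ⟨Equiv.swap i (i + 1) j, ?_, ?_⟩
    · rcases eq_or_ne j i with rfl | hji
      · rw [Equiv.swap_apply_left]; exact hi1
      rcases eq_or_ne j (i + 1) with rfl | hji1
      · rw [Equiv.swap_apply_right]; exact hi
      · rw [Equiv.swap_apply_of_ne_of_ne hji hji1]; exact hj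
    · show p _ = p j
      rw [Equiv.swap_apply_self]

lemma preYT_swapEntries_mid (p : ℕ → ℕ × ℕ) (i : ℕ) :
    preYT (swapEntries i p) (i + 1) = preYT p i ∪ {p (i + 1)} := by
  rw [preYT_succ, preYT_swapEntries_le le_rfl, swapEntries_left]

/-- a swapped filling is an SYT iff the two swapped positions are incomparable -/
lemma swapEntries_isSYT_iff {n : ℕ} {p : ℕ → ℕ × ℕ} (hp : IsSYT n p) {i : ℕ}
    (hi : i + 1 < n) : IsSYT n (swapEntries i p) ↔ ¬ p i ≤ p (i + 1) := by
  have hin : i < n := Nat.lt_of_succ_lt hi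
  constructor
  · intro hs hle
    have hne : p i ≠ p (i + 1) := p_ne hp hin hi (Nat.ne_of_lt (Nat.lt_succ_self i))
    have h1 : p i ∈ preYT (swapEntries i p) (i + 1) := by
      rw [preYT_swapEntries_mid]
      have : p (i + 1) ∈ preYT (swapEntries i p) (i + 1) := by
        rw [preYT_swapEntries_mid]; exact Or.inr rfl
      have hmem : p i ∈ preYT p i ∪ {p (i + 1)} := by
        have hl : IsLowerSet (preYT (swapEntries i p) (i + 1)) :=
          preYT_lower hs (Nat.succ_le_of_lt hin)
        have := hl hle this
        rwa [preYT_swapEntries_mid] at this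
      exact (preYT_swapEntries_mid p i) ▸ hmem
    rw [preYT_swapEntries_mid] at h1
    rcases h1 with h1 | h1
    · exact self_not_mem_preYT hp hin le_rfl h1
    · exact hne h1
  · intro hle
    constructor
    · intro a ha b hb hab
      have hσ : ∀ t, t < n → Equiv.swap i (i + 1) t < n := by
        intro t ht
        rcases eq_or_ne t i with rfl | h1
        · rw [Equiv.swap_apply_left]; exact hi
        rcases eq_or_ne t (i + 1) with rfl | h2
        · rw [Equiv.swap_apply_right]; exact hin
        · rw [Equiv.swap_apply_of_ne_of_ne h1 h2]; exact ht
      have := hp.1 (hσ a ha) (hσ b hb) hab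
      exact (Equiv.swap i (i + 1)).injective this
    · intro k hk
      have hexpr : {q : ℕ × ℕ | ∃ j ≤ k, swapEntries i p j = q} = preYT (swapEntries i p) (k + 1) := by
        ext q; simp only [preYT, Set.mem_setOf_eq, Nat.lt_succ_iff]
      rw [hexpr]
      rcases lt_trichotomy k i with h | heq | h
      · rw [preYT_swapEntries_le (Nat.succ_le_of_lt h)]
        exact preYT_lower hp (Nat.succ_le_of_lt (lt_trans h hin))
      · subst heq
        rw [preYT_swapEntries_mid]
        intro u v huv hu
        rcases hu with hu | hu
        · exact Or.inl (preYT_lower hp (le_of_lt hin) huv hu)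
        · rcases eq_or_ne v (p (k + 1)) with rfl | hvne
          · exact Or.inr rfl
          · have hv : v ∈ preYT p (k + 1) := by
              have h3 : v ≤ p (k + 1) := hu ▸ huv
              exact lower_step hp hi h3 hvne
            rcases hv with ⟨j, hj, rfl⟩
            rcases Nat.lt_or_ge j k with hji | hji
            · exact Or.inl ⟨j, hji, rfl⟩
            · have : j = k := by omega
              subst this
              exact absurd (hu ▸ huv) hle
      · rw [preYT_swapEntries_ge (by omega)]
        exact preYT_lower hp (Nat.succ_le_of_lt hk)

end Vogan

namespace Vogan

open Set

lemma mem_tauYT {n : ℕ} {p : ℕ → ℕ × ℕ} {i : ℕ} :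
    i ∈ tauYT n p ↔ i + 1 < n ∧ (p i).1 < (p (i + 1)).1 := Iff.rfl

/-- Consecutive entries in the same row are in adjacent boxes. -/
lemma row_succ {n : ℕ} {p : ℕ → ℕ × ℕ} (hp : IsSYT n p) {k : ℕ} (hk : k + 1 < n)
    (hrow : (p (k + 1)).1 = (p k).1) : p (k + 1) = ((p k).1, (p k).2 + 1) := by
  have hkn : k < n := Nat.lt_of_succ_lt hk
  have hne : p (k + 1) ≠ p k := p_ne hp hk hkn (by omega)
  rcases lt_trichotomy (p (k + 1)).2 (p k).2 with hc | hc | hc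
  · exfalso
    have hle : p (k + 1) ≤ p k := ⟨le_of_eq hrow, le_of_lt hc⟩
    have := lower_step hp hkn hle hne
    exact self_not_mem_preYT hp hk (Nat.le_succ k) this
  · exact absurd (Prod.ext hrow hc) hne
  · rcases eq_or_lt_of_le (Nat.succ_le_of_lt hc) with h1 | h1
    · exact Prod.ext hrow h1.symm
    · exfalso
      have hw : ((p (k + 1)).1, (p (k + 1)).2 - 1) ≤ p (k + 1) := ⟨le_rfl, Nat.sub_le _ _⟩
      have hwne : ((p (k + 1)).1, (p (k + 1)).2 - 1) ≠ p (k + 1) := by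
        intro hcontra
        have := congrArg Prod.snd hcontra
        simp only at this
        omega
      have hmem := lower_step hp hk hw hwne
      rw [preYT_succ] at hmem
      rcases hmem with hmem | hmem
      · have hal : p k ≤ ((p (k + 1)).1, (p (k + 1)).2 - 1) := ⟨le_of_eq hrow.symm, by omega⟩
        have : p k ∈ preYT p k := preYT_lower hp (le_of_lt hkn) hal hmem
        exact self_not_mem_preYT hp hkn le_rfl this
      · have := congrArg Prod.snd hmem
        simp only at this
        omega

/-- Hard case 1: configuration forcing incomparability of `p i` and `p (i+1)`. -/
lemma hard1 {n i : ℕ} {p : ℕ → ℕ × ℕ} (hp : IsSYT n p) (h2 : i + 2 < n)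
    (hab : (p i).1 < (p (i + 1)).1) (hzb : (p (i + 2)).1 ≤ (p (i + 1)).1)
    (haz : (p i).1 < (p (i + 2)).1) (hle : p i ≤ p (i + 1)) : False := by
  have hi1 : i + 1 < n := Nat.lt_of_succ_lt h2
  have hin : i < n := Nat.lt_of_succ_lt hi1
  -- Step 1 : (p (i+1)).2 < (p (i+2)).2
  have hz2 : (p (i + 1)).2 < (p (i + 2)).2 := by
    by_contra hcon
    push_neg at hcon
    have hzb' : p (i + 2) ≤ p (i + 1) := ⟨hzb, hcon⟩
    have hne : p (i + 2) ≠ p (i + 1) := p_ne hp h2 hi1 (by omega)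
    have := lower_step hp hi1 hzb' hne
    exact self_not_mem_preYT hp h2 (Nat.le_succ _) this
  -- Step 2 : the box (a.1, z.2)
  have hw : ((p i).1, (p (i + 2)).2) ≤ p (i + 2) := ⟨le_of_lt haz, le_rfl⟩
  have hwne : ((p i).1, (p (i + 2)).2) ≠ p (i + 2) := by
    intro hcontra
    have := congrArg Prod.fst hcontra
    simp only at this
    omega
  obtain ⟨j, hj, hjw⟩ := lower_step hp h2 hw hwne
  rcases (by omega : j = i + 1 ∨ j = i ∨ j < i) with heq | heq | hji
  all_goals try rw [heq] at hjw
  · have := congrArg Prod.fst hjw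
    simp only at this
    omega
  · have := congrArg Prod.snd hjw
    simp only at this
    have := hle.2
    omega
  · have hmem : ((p i).1, (p (i + 2)).2) ∈ preYT p i := ⟨j, hji, hjw⟩
    have hal : p i ≤ ((p i).1, (p (i + 2)).2) := ⟨le_rfl, le_of_lt (lt_of_le_of_lt hle.2 hz2)⟩
    have : p i ∈ preYT p i := preYT_lower hp (le_of_lt hin) hal hmem
    exact self_not_mem_preYT hp hin le_rfl this

/-- Hard case 2: configuration forcing incomparability of `p (J+1)` and `p (J+2)`. -/
lemma hard2 {n J : ℕ} {p : ℕ → ℕ × ℕ} (hp : IsSYT n p) (h2 : J + 2 < n)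
    (hba : (p (J + 1)).1 ≤ (p J).1) (hbz : (p (J + 1)).1 < (p (J + 2)).1)
    (haz : (p J).1 < (p (J + 2)).1) (hle : p (J + 1) ≤ p (J + 2)) : False := by
  have hi1 : J + 1 < n := Nat.lt_of_succ_lt h2
  have hin : J < n := Nat.lt_of_succ_lt hi1
  have hbmem : ∀ w ∈ preYT p J, p (J + 1) ≤ w → False := by
    intro w hwmem hwle
    have : p (J + 1) ∈ preYT p J := preYT_lower hp (le_of_lt hin) hwle hwmem
    exact self_not_mem_preYT hp hi1 (Nat.le_succ _) this
  have hamem : ∀ w ∈ preYT p J, p J ≤ w → False := by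
    intro w hwmem hwle
    have : p J ∈ preYT p J := preYT_lower hp (le_of_lt hin) hwle hwmem
    exact self_not_mem_preYT hp hin le_rfl this
  -- the box (b.1, z.2)
  have hw : ((p (J + 1)).1, (p (J + 2)).2) ≤ p (J + 2) := ⟨le_of_lt hbz, le_rfl⟩
  have hwne : ((p (J + 1)).1, (p (J + 2)).2) ≠ p (J + 2) := by
    intro hcontra; have := congrArg Prod.fst hcontra; simp only at this; omega
  obtain ⟨j, hj, hjw⟩ := lower_step hp h2 hw hwne
  have hsub1 : (p (J + 2)).2 = (p (J + 1)).2 → False := by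
    -- subcase (i)
    intro hzb2
    have hw2 : ((p J).1, (p (J + 1)).2) ≤ p (J + 2) := ⟨le_of_lt haz, le_of_eq hzb2.symm⟩
    have hw2ne : ((p J).1, (p (J + 1)).2) ≠ p (J + 2) := by
      intro hcontra; have := congrArg Prod.fst hcontra; simp only at this; omega
    obtain ⟨j', hj', hj'w⟩ := lower_step hp h2 hw2 hw2ne
    rcases (by omega : j' = J + 1 ∨ j' = J ∨ j' < J) with heq | heq | hj'J
    all_goals try rw [heq] at hj'w
    · -- b.1 = a.1 : same row, so b = (a.1, a.2+1)
      have hrow : (p (J + 1)).1 = (p J).1 := by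
        have := congrArg Prod.fst hj'w; simp only at this; omega
      have hb := row_succ hp hi1 hrow
      -- the box (z.1, a.2)
      have hw3 : ((p (J + 2)).1, (p J).2) ≤ p (J + 2) := by
        refine ⟨le_rfl, ?_⟩
        have := congrArg Prod.snd hb; simp only at this
        omega
      have hw3ne : ((p (J + 2)).1, (p J).2) ≠ p (J + 2) := by
        intro hcontra
        have h4 := congrArg Prod.snd hcontra; simp only at h4
        have h5 := congrArg Prod.snd hb; simp only at h5
        omega
      obtain ⟨t, ht, htw⟩ := lower_step hp h2 hw3 hw3ne
      rcases (by omega : t = J + 1 ∨ t = J ∨ t < J) with heq | heq | htJ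
      · rw [heq] at htw; have := congrArg Prod.fst htw; simp only at this; omega
      · rw [heq] at htw; have := congrArg Prod.fst htw; simp only at this; omega
      · exact hamem _ ⟨t, htJ, htw⟩ ⟨le_of_lt haz, le_rfl⟩
    · -- a.2 = b.2 : then b ≤ a
      have ha2 : (p J).2 = (p (J + 1)).2 := by
        have := congrArg Prod.snd hj'w; simp only at this; omega
      have hble : p (J + 1) ≤ p J := ⟨hba, le_of_eq ha2.symm⟩
      have hbne : p (J + 1) ≠ p J := p_ne hp hi1 hin (by omega)
      have := lower_step hp hin hble hbne
      exact self_not_mem_preYT hp hi1 (Nat.le_succ _) this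
    · exact hbmem _ ⟨j', hj'J, hj'w⟩ ⟨hba, le_rfl⟩
  rcases (by omega : j = J + 1 ∨ j = J ∨ j < J) with heq | heq | hjJ
  all_goals try rw [heq] at hjw
  · exact hsub1 (by have := congrArg Prod.snd hjw; simp only at this; omega)
  · -- subcase (ii) : a = (b.1, z.2)
    have hrow : (p (J + 1)).1 = (p J).1 := by
      have := congrArg Prod.fst hjw; simp only at this; omega
    have hb := row_succ hp hi1 hrow
    have h5 := congrArg Prod.snd hb; simp only at h5
    have h6 := congrArg Prod.snd hjw; simp only at h6
    have := hle.2
    omega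
  · exact hbmem _ ⟨j, hjJ, hjw⟩ ⟨le_rfl, hle.2⟩

end Vogan

namespace Vogan

open Set

lemma fYT_eq_swap (n i j : ℕ) (p : ℕ → ℕ × ℕ) :
    fYT n i j p = swapEntries i p ∨ fYT n i j p = swapEntries j p := by
  classical
  unfold fYT
  exact ite_eq_or_eq _ _ _

lemma fYT_high {n i j m : ℕ} {p : ℕ → ℕ × ℕ} (hi : i + 1 < m) (hj : j + 1 < m) {t : ℕ}
    (ht : m ≤ t) : fYT n i j p t = p t := by
  rcases fYT_eq_swap n i j p with h | h <;> rw [h] <;>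
    exact swapEntries_other p (by omega) (by omega)

/-- Family 1: `p ∈ D_{i,i+1}`. -/
lemma fYT_spec_lt {n i : ℕ} {p : ℕ → ℕ × ℕ} (hp : IsSYT n p) (h2 : i + 2 < n)
    (hT : (p i).1 < (p (i + 1)).1) (hF : ¬ (p (i + 1)).1 < (p (i + 2)).1) :
    ((((p (i + 2)).1 ≤ (p i).1) ∧ fYT n i (i + 1) p = swapEntries (i + 1) p) ∨
     (((p i).1 < (p (i + 2)).1) ∧ fYT n i (i + 1) p = swapEntries i p)) ∧
    DYT n (i + 1) i (fYT n i (i + 1) p) := by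
  classical
  have E1 : p (i + 1 + 1) = p (i + 2) := rfl
  have hi1 : i + 1 < n := Nat.lt_of_succ_lt h2
  have hin : i < n := Nat.lt_of_succ_lt hi1
  rcases Nat.lt_or_ge (p i).1 (p (i + 2)).1 with hc | hc
  · -- branch : swap entries i, i+1
    have hcond : DYT n (i + 1) i (swapEntries i p) := by
      refine ⟨?_, ?_, ?_⟩
      · rw [swapEntries_isSYT_iff hp hi1]
        exact fun hle => hard1 hp h2 hT (le_of_not_gt hF) hc hle
      · refine ⟨h2, ?_⟩
        rw [swapEntries_right, swapEntries_other p (by omega) (by omega)]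
        exact hc
      · rw [mem_tauYT, swapEntries_left, swapEntries_right]
        rintro ⟨-, hcon⟩
        first
    | omega
    | (simp only [E1] at *; omega)
    have hfeq : fYT n i (i + 1) p = swapEntries i p := by
      unfold fYT; rw [if_pos hcond]
    rw [hfeq]
    exact ⟨Or.inr ⟨hc, rfl⟩, hcond⟩
  · -- branch : swap entries i+1, i+2
    have hcond : ¬ DYT n (i + 1) i (swapEntries i p) := by
      rintro ⟨-, hmem, -⟩
      rcases hmem with ⟨-, hcon⟩
      rw [swapEntries_right, swapEntries_other p (by omega) (by omega)] at hcon
      first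
    | omega
    | (simp only [E1] at *; omega)
    have hfeq : fYT n i (i + 1) p = swapEntries (i + 1) p := by
      unfold fYT; rw [if_neg hcond]
    rw [hfeq]
    refine ⟨Or.inl ⟨hc, rfl⟩, ?_, ?_, ?_⟩
    · rw [swapEntries_isSYT_iff hp h2]
      intro hle
      have := hle.1
      first
    | omega
    | (simp only [E1] at *; omega)
    · refine ⟨h2, ?_⟩
      rw [show i + 1 + 1 = i + 2 from rfl, swapEntries_left, swapEntries_right]
      first
    | omega
    | (simp only [E1] at *; omega)
    · rw [mem_tauYT, swapEntries_other p (by omega) (by omega), swapEntries_left]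
      rintro ⟨-, hcon⟩
      first
    | omega
    | (simp only [E1] at *; omega)

/-- Family 2: `p ∈ D_{J+1,J}`. -/
lemma fYT_spec_gt {n J : ℕ} {p : ℕ → ℕ × ℕ} (hp : IsSYT n p) (h2 : J + 2 < n)
    (hT : (p (J + 1)).1 < (p (J + 2)).1) (hF : ¬ (p J).1 < (p (J + 1)).1) :
    ((((p (J + 2)).1 ≤ (p J).1) ∧ fYT n (J + 1) J p = swapEntries J p) ∨
     (((p J).1 < (p (J + 2)).1) ∧ fYT n (J + 1) J p = swapEntries (J + 1) p)) ∧
    DYT n J (J + 1) (fYT n (J + 1) J p) := by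
  classical
  have E1 : p (J + 1 + 1) = p (J + 2) := rfl
  have hi1 : J + 1 < n := Nat.lt_of_succ_lt h2
  have hin : J < n := Nat.lt_of_succ_lt hi1
  rcases Nat.lt_or_ge (p J).1 (p (J + 2)).1 with hc | hc
  · -- branch : swap entries J+1, J+2
    have hcond : DYT n J (J + 1) (swapEntries (J + 1) p) := by
      refine ⟨?_, ?_, ?_⟩
      · rw [swapEntries_isSYT_iff hp h2]
        exact fun hle => hard2 hp h2 (le_of_not_gt hF) hT hc hle
      · refine ⟨hi1, ?_⟩
        rw [swapEntries_other p (by omega) (by omega), swapEntries_left]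
        exact hc
      · rw [mem_tauYT, show J + 1 + 1 = J + 2 from rfl, swapEntries_left, swapEntries_right]
        rintro ⟨-, hcon⟩
        first
    | omega
    | (simp only [E1] at *; omega)
    have hfeq : fYT n (J + 1) J p = swapEntries (J + 1) p := by
      unfold fYT; rw [if_pos hcond]
    rw [hfeq]
    exact ⟨Or.inr ⟨hc, rfl⟩, hcond⟩
  · -- branch : swap entries J, J+1
    have hcond : ¬ DYT n J (J + 1) (swapEntries (J + 1) p) := by
      rintro ⟨-, hmem, -⟩
      rcases hmem with ⟨-, hcon⟩
      rw [swapEntries_other p (by omega) (by omega), swapEntries_left] at hcon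
      first
    | omega
    | (simp only [E1] at *; omega)
    have hfeq : fYT n (J + 1) J p = swapEntries J p := by
      unfold fYT; rw [if_neg hcond]
    rw [hfeq]
    refine ⟨Or.inl ⟨hc, rfl⟩, ?_, ?_, ?_⟩
    · rw [swapEntries_isSYT_iff hp hi1]
      intro hle
      have := hle.1
      first
    | omega
    | (simp only [E1] at *; omega)
    · refine ⟨hi1, ?_⟩
      rw [swapEntries_left, swapEntries_right]
      first
    | omega
    | (simp only [E1] at *; omega)
    · rw [mem_tauYT, swapEntries_right, swapEntries_other p (by omega) (by omega)]
      rintro ⟨-, hcon⟩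
      first
    | omega
    | (simp only [E1] at *; omega)

/-- The `f`-move sends `D_{i,j}` into `D_{j,i}`. -/
lemma fYT_DYT {n i j : ℕ} {p : ℕ → ℕ × ℕ} (hadj : Adjacent i j) (hi : i + 1 < n)
    (hj : j + 1 < n) (hD : DYT n i j p) : DYT n j i (fYT n i j p) := by
  rcases hadj with heq | heq
  · -- i = j + 1 : family 2
    subst heq
    have hT : (p (j + 1)).1 < (p (j + 2)).1 := hD.2.1.2
    have hF : ¬ (p j).1 < (p (j + 1)).1 := by
      intro hcon
      exact hD.2.2 ⟨Nat.lt_of_succ_lt hi, hcon⟩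
    exact (fYT_spec_gt hD.1 hi hT hF).2
  · -- j = i + 1 : family 1
    subst heq
    have hT : (p i).1 < (p (i + 1)).1 := hD.2.1.2
    have hF : ¬ (p (i + 1)).1 < (p (i + 2)).1 := by
      intro hcon
      exact hD.2.2 ⟨hj, hcon⟩
    exact (fYT_spec_lt hD.1 hj hT hF).2

end Vogan

namespace Vogan

open Set

lemma isSYT_mono {m n : ℕ} {p : ℕ → ℕ × ℕ} (hmn : m ≤ n) (hp : IsSYT n p) : IsSYT m p :=
  ⟨hp.1.mono (Set.Iio_subset_Iio hmn), fun k hk => hp.2 k (lt_of_lt_of_le hk hmn)⟩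

lemma isSYT_iff {n : ℕ} {p : ℕ → ℕ × ℕ} :
    IsSYT n p ↔ Set.InjOn p (Set.Iio n) ∧ ∀ k < n, IsLowerSet (preYT p (k + 1)) := by
  unfold IsSYT
  have h : ∀ k : ℕ, {q : ℕ × ℕ | ∃ j ≤ k, p j = q} = preYT p (k + 1) := by
    intro k; ext q; simp only [preYT, Set.mem_setOf_eq, Nat.lt_succ_iff]
  simp_rw [h]

lemma tauYT_mem_restrict {m n i : ℕ} {p : ℕ → ℕ × ℕ} (hmn : m ≤ n) :
    i ∈ tauYT m p ↔ i + 1 < m ∧ i ∈ tauYT n p := by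
  simp only [mem_tauYT]
  constructor
  · rintro ⟨h1, h2⟩; exact ⟨h1, lt_of_lt_of_le h1 hmn, h2⟩
  · rintro ⟨h1, -, h2⟩; exact ⟨h1, h2⟩

lemma DYT_restrict {m n i j : ℕ} {p : ℕ → ℕ × ℕ} (hmn : m ≤ n) (hi : i + 1 < m)
    (hj : j + 1 < m) (hp : IsSYT n p) : DYT m i j p ↔ DYT n i j p := by
  constructor
  · rintro ⟨-, h1, h2⟩
    exact ⟨hp, ((tauYT_mem_restrict hmn).1 h1).2,
      fun hc => h2 ((tauYT_mem_restrict hmn).2 ⟨hj, hc⟩)⟩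
  · rintro ⟨-, h1, h2⟩
    exact ⟨isSYT_mono hmn hp, (tauYT_mem_restrict hmn).2 ⟨hi, h1⟩,
      fun hc => h2 (((tauYT_mem_restrict hmn).1 hc).2)⟩

lemma swap_isSYT_restrict {m n k : ℕ} {p : ℕ → ℕ × ℕ} (hmn : m ≤ n) (hk : k + 1 < m)
    (hp : IsSYT n p) : IsSYT m (swapEntries k p) ↔ IsSYT n (swapEntries k p) := by
  rw [swapEntries_isSYT_iff hp (lt_of_lt_of_le hk hmn),
    swapEntries_isSYT_iff (isSYT_mono hmn hp) hk]

lemma fYT_restrict {m n i j : ℕ} {p : ℕ → ℕ × ℕ} (hmn : m ≤ n) (hi : i + 1 < m)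
    (hj : j + 1 < m) (hp : IsSYT n p) : fYT m i j p = fYT n i j p := by
  classical
  have hcond : DYT m j i (swapEntries i p) ↔ DYT n j i (swapEntries i p) := by
    constructor
    · rintro ⟨hs, h1, h2⟩
      exact ⟨(swap_isSYT_restrict hmn hi hp).1 hs, ((tauYT_mem_restrict hmn).1 h1).2,
        fun hc => h2 ((tauYT_mem_restrict hmn).2 ⟨hi, hc⟩)⟩
    · rintro ⟨hs, h1, h2⟩
      exact ⟨(swap_isSYT_restrict hmn hi hp).2 hs, (tauYT_mem_restrict hmn).2 ⟨hj, h1⟩,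
        fun hc => h2 (((tauYT_mem_restrict hmn).1 hc).2)⟩
  unfold fYT
  by_cases h : DYT n j i (swapEntries i p)
  · rw [if_pos (hcond.2 h), if_pos h]
  · rw [if_neg (fun hc => h (hcond.1 hc)), if_neg h]

lemma approxYT_restrict {m n : ℕ} (hmn : m ≤ n) :
    ∀ (K : ℕ) (p q : ℕ → ℕ × ℕ), IsSYT n p → IsSYT n q →
      approxYT n K p q → approxYT m K p q := by
  intro K
  induction K with
  | zero =>
    intro p q hp hq h
    ext i
    rw [tauYT_mem_restrict hmn, tauYT_mem_restrict hmn, (show tauYT n p = tauYT n q from h)]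
  | succ K ih =>
    intro p q hp hq h
    refine ⟨ih p q hp hq h.1, ?_⟩
    intro i j hadj hi hj hDp hDq
    have hDpn := (DYT_restrict hmn hi hj hp).1 hDp
    have hDqn := (DYT_restrict hmn hi hj hq).1 hDq
    have hin : i + 1 < n := lt_of_lt_of_le hi hmn
    have hjn : j + 1 < n := lt_of_lt_of_le hj hmn
    have h2 := h.2 i j hadj hin hjn hDpn hDqn
    rw [fYT_restrict hmn hi hj hp, fYT_restrict hmn hi hj hq]
    exact ih _ _ (fYT_DYT hadj hin hjn hDpn).1 (fYT_DYT hadj hin hjn hDqn).1 h2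

lemma approxYT_symm {n : ℕ} : ∀ (K : ℕ) {p q : ℕ → ℕ × ℕ},
    approxYT n K p q → approxYT n K q p := by
  intro K
  induction K with
  | zero => intro p q h; exact h.symm
  | succ K ih =>
    intro p q h
    exact ⟨ih h.1, fun i j hadj hi hj hDq hDp => ih (h.2 i j hadj hi hj hDp hDq)⟩

lemma EqB.symm {m : ℕ} {p q : ℕ → ℕ × ℕ} (h : EqB m p q) : EqB m q p :=
  fun k hk => (h k hk).symm

lemma preYT_congr {m : ℕ} {p q : ℕ → ℕ × ℕ} (h : EqB m p q) {t : ℕ} (ht : t ≤ m) :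
    preYT p t = preYT q t := by
  ext x
  constructor
  · rintro ⟨j, hj, rfl⟩
    exact ⟨j, hj, (h j (lt_of_lt_of_le hj ht)).symm⟩
  · rintro ⟨j, hj, rfl⟩
    exact ⟨j, hj, h j (lt_of_lt_of_le hj ht)⟩

lemma isSYT_congr {n : ℕ} {p q : ℕ → ℕ × ℕ} (h : EqB n p q) (hp : IsSYT n p) : IsSYT n q := by
  rw [isSYT_iff] at hp ⊢
  constructor
  · intro a ha b hb hab
    refine hp.1 ha hb ?_
    rw [h a ha, h b hb]
    exact hab
  · intro k hk
    rw [← preYT_congr h (Nat.succ_le_of_lt hk)]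
    exact hp.2 k hk

lemma tauYT_congr {n : ℕ} {p q : ℕ → ℕ × ℕ} (h : EqB n p q) : tauYT n p = tauYT n q := by
  ext i
  simp only [mem_tauYT]
  constructor
  · rintro ⟨h1, h2⟩
    rw [← h i (Nat.lt_of_succ_lt h1), ← h (i + 1) h1]
    exact ⟨h1, h2⟩
  · rintro ⟨h1, h2⟩
    rw [h i (Nat.lt_of_succ_lt h1), h (i + 1) h1]
    exact ⟨h1, h2⟩

lemma DYT_congr {n i j : ℕ} {p q : ℕ → ℕ × ℕ} (h : EqB n p q) :
    DYT n i j p ↔ DYT n i j q := by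
  unfold DYT
  rw [tauYT_congr h]
  constructor
  · rintro ⟨hs, h1, h2⟩; exact ⟨isSYT_congr h hs, h1, h2⟩
  · rintro ⟨hs, h1, h2⟩; exact ⟨isSYT_congr h.symm hs, h1, h2⟩

lemma swapEntries_congr {m k : ℕ} {p q : ℕ → ℕ × ℕ} (h : EqB m p q) (hk : k + 1 < m) :
    EqB m (swapEntries k p) (swapEntries k q) := by
  intro t ht
  show p _ = q _
  apply h
  rcases eq_or_ne t k with rfl | h1
  · rw [Equiv.swap_apply_left]; exact hk
  rcases eq_or_ne t (k + 1) with rfl | h2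
  · rw [Equiv.swap_apply_right]; omega
  · rw [Equiv.swap_apply_of_ne_of_ne h1 h2]; exact ht

lemma fYT_congr_below {n m i j : ℕ} {p q : ℕ → ℕ × ℕ} (hp : IsSYT n p) (hq : IsSYT n q)
    (h : EqB m p q) (hmn : m ≤ n) (hi : i + 1 < m) (hj : j + 1 < m) :
    EqB m (fYT n i j p) (fYT n i j q) := by
  classical
  have hswap : EqB m (swapEntries i p) (swapEntries i q) := swapEntries_congr h hi
  have hDiff : DYT n j i (swapEntries i p) ↔ DYT n j i (swapEntries i q) := by
    unfold DYT
    have ht1 : j ∈ tauYT n (swapEntries i p) ↔ j ∈ tauYT n (swapEntries i q) := by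
      simp only [mem_tauYT]
      rw [hswap j (by omega), hswap (j + 1) hj]
    have ht2 : i ∈ tauYT n (swapEntries i p) ↔ i ∈ tauYT n (swapEntries i q) := by
      simp only [mem_tauYT]
      rw [hswap i (by omega), hswap (i + 1) hi]
    rw [swapEntries_isSYT_iff hp (by omega), swapEntries_isSYT_iff hq (by omega),
      h i (by omega), h (i + 1) hi]
    rw [show (j ∈ tauYT n (swapEntries i p)) = (j ∈ tauYT n (swapEntries i q)) from propext ht1,
      show (i ∈ tauYT n (swapEntries i p)) = (i ∈ tauYT n (swapEntries i q)) from propext ht2]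
  unfold fYT
  by_cases hc : DYT n j i (swapEntries i q)
  · rw [if_pos (hDiff.2 hc), if_pos hc]
    exact hswap
  · rw [if_neg (fun x => hc (hDiff.1 x)), if_neg hc]
    exact swapEntries_congr h hj

lemma applySeq_nil (n : ℕ) (p : ℕ → ℕ × ℕ) : applySeq n [] p = p := rfl

lemma applySeq_cons (n : ℕ) (ij : ℕ × ℕ) (L : List (ℕ × ℕ)) (p : ℕ → ℕ × ℕ) :
    applySeq n (ij :: L) p = applySeq n L (fYT n ij.1 ij.2 p) := rfl

lemma applySeq_append (n : ℕ) (L1 L2 : List (ℕ × ℕ)) (p : ℕ → ℕ × ℕ) :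
    applySeq n (L1 ++ L2) p = applySeq n L2 (applySeq n L1 p) := by
  unfold applySeq
  rw [List.foldl_append]

lemma ChainDefined_append {n : ℕ} :
    ∀ {L1 L2 : List (ℕ × ℕ)} {p : ℕ → ℕ × ℕ}, ChainDefined n L1 p →
      ChainDefined n L2 (applySeq n L1 p) → ChainDefined n (L1 ++ L2) p := by
  intro L1
  induction L1 with
  | nil => intro L2 p _ h2; exact h2
  | cons ij L ih =>
    intro L2 p h1 h2
    obtain ⟨hadj, hi, hj, hD, hrest⟩ := h1
    exact ⟨hadj, hi, hj, hD, ih hrest h2⟩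

lemma chain_lift {m n : ℕ} (hmn : m ≤ n) :
    ∀ (L : List (ℕ × ℕ)) (p : ℕ → ℕ × ℕ), IsSYT n p → ChainDefined m L p →
      ChainDefined n L p ∧ applySeq n L p = applySeq m L p := by
  intro L
  induction L with
  | nil => intro p hp _; exact ⟨trivial, rfl⟩
  | cons ij L ihL =>
    intro p hp hc
    obtain ⟨hadj, hi, hj, hD, hrest⟩ := hc
    have hDn := (DYT_restrict hmn hi hj hp).1 hD
    have hin : ij.1 + 1 < n := lt_of_lt_of_le hi hmn
    have hjn : ij.2 + 1 < n := lt_of_lt_of_le hj hmn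
    have hfeq : fYT m ij.1 ij.2 p = fYT n ij.1 ij.2 p := fYT_restrict hmn hi hj hp
    have hSYT : IsSYT n (fYT n ij.1 ij.2 p) := (fYT_DYT hadj hin hjn hDn).1
    rw [hfeq] at hrest
    obtain ⟨hcd, happ⟩ := ihL (fYT n ij.1 ij.2 p) hSYT hrest
    refine ⟨⟨hadj, hin, hjn, hDn, hcd⟩, ?_⟩
    show applySeq n L (fYT n ij.1 ij.2 p) = applySeq m L (fYT m ij.1 ij.2 p)
    rw [happ, ← hfeq]

lemma applySeq_high {m n : ℕ} (hmn : m ≤ n) :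
    ∀ (L : List (ℕ × ℕ)) (p : ℕ → ℕ × ℕ), IsSYT n p → ChainDefined m L p →
      ∀ t, m ≤ t → applySeq n L p t = p t := by
  intro L
  induction L with
  | nil => intro p _ _ t _; rfl
  | cons ij L ihL =>
    intro p hp hc t ht
    obtain ⟨hadj, hi, hj, hD, hrest⟩ := hc
    have hDn := (DYT_restrict hmn hi hj hp).1 hD
    have hin : ij.1 + 1 < n := lt_of_lt_of_le hi hmn
    have hjn : ij.2 + 1 < n := lt_of_lt_of_le hj hmn
    have hfeq : fYT m ij.1 ij.2 p = fYT n ij.1 ij.2 p := fYT_restrict hmn hi hj hp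
    have hSYT : IsSYT n (fYT n ij.1 ij.2 p) := (fYT_DYT hadj hin hjn hDn).1
    rw [hfeq] at hrest
    rw [applySeq_cons, ihL _ hSYT hrest t ht, fYT_high hi hj ht]

end Vogan

namespace Vogan

open Set

lemma preYT_eq_image (p : ℕ → ℕ × ℕ) (m : ℕ) : preYT p m = p '' Set.Iio m := by
  ext q
  simp only [preYT, Set.mem_setOf_eq, Set.mem_image, Set.mem_Iio]

lemma preYT_finite (p : ℕ → ℕ × ℕ) (m : ℕ) : (preYT p m).Finite := by
  rw [preYT_eq_image]
  exact (Set.finite_Iio m).image p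

lemma preYT_ncard {n : ℕ} {p : ℕ → ℕ × ℕ} (hp : IsSYT n p) {m : ℕ} (hm : m ≤ n) :
    (preYT p m).ncard = m := by
  rw [preYT_eq_image, Set.ncard_image_of_injOn (hp.1.mono (Set.Iio_subset_Iio hm))]
  rw [← Finset.coe_Iio, Set.ncard_coe_finset]
  simp

lemma preYT_top {m : ℕ} {p : ℕ → ℕ × ℕ} (hp : IsSYT (m + 1) p) :
    preYT p m = preYT p (m + 1) \ {p m} := by
  ext x
  constructor
  · rintro ⟨j, hj, rfl⟩
    exact ⟨⟨j, Nat.lt_succ_of_lt hj, rfl⟩,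
      fun hc => absurd (hp.1 (Nat.lt_succ_of_lt hj) (Nat.lt_succ_self m) hc)
        (Nat.ne_of_lt hj)⟩
  · rintro ⟨⟨j, hj, rfl⟩, hne⟩
    have : j ≠ m := fun hc => hne (by rw [hc]; exact rfl)
    exact ⟨j, by omega, rfl⟩

/-- Any finite Young diagram with a box in column `s` at row `r` but not at row `r'`
has a removable corner with row in `[r, r')`. -/
lemma corner_exists {S : Set (ℕ × ℕ)} (hS : IsLowerSet S) (hfin : S.Finite) {r r' s : ℕ}
    (h1 : (r, s) ∈ S) (h2 : (r', s) ∉ S) :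
    ∃ x ∈ S, r ≤ x.1 ∧ x.1 < r' ∧ IsLowerSet (S \ {x}) := by
  classical
  have hrr' : r < r' := by
    by_contra hc
    push_neg at hc
    exact h2 (hS (Prod.mk_le_mk.2 ⟨hc, le_rfl⟩) h1)
  set P : ℕ → Prop := fun t => (t, s) ∈ S with hP
  have hPr : P r := h1
  set r0 := Nat.findGreatest P r' with hr0
  have hr0P : P r0 := Nat.findGreatest_spec (le_of_lt hrr') hPr
  have hrler0 : r ≤ r0 := Nat.le_findGreatest (le_of_lt hrr') hPr
  have hr0le : r0 ≤ r' := Nat.findGreatest_le r'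
  have hr0lt : r0 < r' := lt_of_le_of_ne hr0le (fun h => h2 (h ▸ hr0P))
  have hnot : ¬ P (r0 + 1) :=
    Nat.findGreatest_is_greatest (Nat.lt_succ_self r0) (Nat.succ_le_of_lt hr0lt)
  obtain ⟨B, hB⟩ := (hfin.image Prod.snd).bddAbove
  have hBmem : ∀ q ∈ S, q.2 ≤ B := fun q hq => hB (Set.mem_image_of_mem _ hq)
  set Q : ℕ → Prop := fun c => (r0, c) ∈ S with hQ
  have hQs : Q s := hr0P
  have hsB : s ≤ B := hBmem _ hr0P
  set L := Nat.findGreatest Q B with hL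
  have hQL : Q L := Nat.findGreatest_spec hsB hQs
  have hsL : s ≤ L := Nat.le_findGreatest hsB hQs
  have hLmax : ∀ c, L < c → (r0, c) ∉ S := by
    intro c hc hmem
    rcases Nat.lt_or_ge B c with h | h
    · exact absurd (hBmem _ hmem) (by omega)
    · exact Nat.findGreatest_is_greatest hc h hmem
  refine ⟨(r0, L), hQL, hrler0, hr0lt, ?_⟩
  intro a b hba ha
  obtain ⟨haS, hane⟩ := ha
  refine ⟨hS hba haS, ?_⟩
  intro hbeq
  rw [Set.mem_singleton_iff] at hbeq
  subst hbeq
  -- now (r0, L) ≤ a with a ∈ S, a ≠ (r0, L)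
  rcases eq_or_lt_of_le hba.1 with h | h
  · have h4 : a.2 ≤ L := by
      by_contra hc
      push_neg at hc
      exact hLmax a.2 hc (by rwa [show ((r0 : ℕ), a.2) = a from Prod.ext h rfl])
    have haeq : a = (r0, L) := Prod.ext h.symm (le_antisymm h4 hba.2)
    exact hane (by rw [haeq]; rfl)
  · exact hnot (hS (Prod.mk_le_mk.2 ⟨h, le_trans hsL hba.2⟩) haS)

/-- Extend an SYT by one more box. -/
lemma isSYT_extend {m : ℕ} {p0 : ℕ → ℕ × ℕ} {S : Set (ℕ × ℕ)} {x : ℕ × ℕ}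
    (hp0 : IsSYT m p0) (hpre : preYT p0 m = S) (hx : x ∉ S) (hlow : IsLowerSet (S ∪ {x})) :
    ∃ p, IsSYT (m + 1) p ∧ preYT p (m + 1) = S ∪ {x} ∧ p m = x ∧ EqB m p p0 := by
  set p : ℕ → ℕ × ℕ := fun t => if t = m then x else p0 t with hpdef
  have hEqB : EqB m p p0 := by
    intro k hk
    simp only [hpdef, if_neg (Nat.ne_of_lt hk)]
  have hpm : p m = x := by simp [hpdef]
  have hprecalc : preYT p (m + 1) = S ∪ {x} := by
    rw [preYT_succ, preYT_congr hEqB le_rfl, hpre, hpm]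
  refine ⟨p, ?_, hprecalc, hpm, hEqB⟩
  rw [isSYT_iff]
  constructor
  · intro a ha b hb hab
    simp only [Set.mem_Iio] at ha hb
    by_cases hA : a = m <;> by_cases hB : b = m
    · rw [hA, hB]
    · exfalso
      rw [hA, hpm] at hab
      rw [hEqB b (by omega)] at hab
      exact hx (hpre ▸ ⟨b, by omega, hab.symm⟩)
    · exfalso
      rw [hB, hpm] at hab
      rw [hEqB a (by omega)] at hab
      exact hx (hpre ▸ ⟨a, by omega, hab⟩)
    · rw [hEqB a (by omega), hEqB b (by omega)] at hab
      exact hp0.1 (Set.mem_Iio.2 (by omega)) (Set.mem_Iio.2 (by omega)) hab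
  · intro k hk
    rcases Nat.lt_or_ge k m with h | h
    · rw [preYT_congr hEqB (Nat.succ_le_of_lt h)]
      exact (isSYT_iff.1 hp0).2 k h
    · have : k = m := by omega
      subst this
      rw [hprecalc]
      exact hlow

/-- Every finite Young diagram is the shape of some SYT. -/
lemma exists_SYT : ∀ (m : ℕ) (S : Set (ℕ × ℕ)), IsLowerSet S → S.Finite → S.ncard = m →
    ∃ p, IsSYT m p ∧ preYT p m = S := by
  intro m
  induction m with
  | zero =>
    intro S _ hfin hcard
    refine ⟨fun _ => (0, 0), ⟨?_, ?_⟩, ?_⟩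
    · intro a ha b hb hab
      simp only [Set.mem_Iio] at ha
      omega
    · intro k hk
      exact absurd hk (Nat.not_lt_zero k)
    · rw [preYT_zero, ((Set.ncard_eq_zero hfin).1 hcard)]
  | succ m ih =>
    intro S hS hfin hcard
    have hne : S.Nonempty := by
      rw [Set.nonempty_iff_ne_empty]
      intro h
      rw [h] at hcard
      simp at hcard
    obtain ⟨⟨r, s⟩, hrs⟩ := hne
    obtain ⟨R, hR⟩ := (hfin.image Prod.fst).bddAbove
    have hR' : ((R + 1 : ℕ), s) ∉ S := by
      intro hmem
      have h5 : R + 1 ≤ R := by simpa using hR (Set.mem_image_of_mem Prod.fst hmem)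
      omega
    obtain ⟨x, hxS, -, -, hxlow⟩ := corner_exists hS hfin hrs hR'
    have hdcard : (S \ {x}).ncard = m := by
      rw [Set.ncard_diff_singleton_of_mem hxS, hcard]
      rfl
    obtain ⟨p0, hp0, hpre0⟩ := ih (S \ {x}) hxlow hfin.diff hdcard
    have hunion : (S \ {x}) ∪ {x} = S := by
      rw [Set.diff_union_self]
      exact Set.union_eq_self_of_subset_right (Set.singleton_subset_iff.2 hxS)
    obtain ⟨p, hp, hpre, -, -⟩ := isSYT_extend hp0 hpre0 (fun h => h.2 rfl) (by rw [hunion]; exact hS)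
    exact ⟨p, hp, by rw [hpre, hunion]⟩

/-- SYT with prescribed removable corner as position of the largest entry. -/
lemma exists_SYT_top {m : ℕ} {S : Set (ℕ × ℕ)} (hS : IsLowerSet S) (hfin : S.Finite)
    (hcard : S.ncard = m + 1) {x : ℕ × ℕ} (hx : x ∈ S) (hlow : IsLowerSet (S \ {x})) :
    ∃ p, IsSYT (m + 1) p ∧ preYT p (m + 1) = S ∧ p m = x := by
  have hdcard : (S \ {x}).ncard = m := by
    rw [Set.ncard_diff_singleton_of_mem hx, hcard]
    rfl
  obtain ⟨p0, hp0, hpre0⟩ := exists_SYT m (S \ {x}) hlow hfin.diff hdcard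
  have hunion : (S \ {x}) ∪ {x} = S := by
    rw [Set.diff_union_self]
    exact Set.union_eq_self_of_subset_right (Set.singleton_subset_iff.2 hx)
  obtain ⟨p, hp, hpre, hpm, -⟩ := isSYT_extend hp0 hpre0 (fun h => h.2 rfl) (by rw [hunion]; exact hS)
  exact ⟨p, hp, by rw [hpre, hunion], hpm⟩

end Vogan

namespace Vogan

open Set

/-- Shared continuation for the connectivity proof. -/
lemma conn_step {M : ℕ} {t q : ℕ → ℕ × ℕ}
    (ih : ∀ p' q' : ℕ → ℕ × ℕ, IsSYT (M + 2) p' → IsSYT (M + 2) q' →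
      preYT p' (M + 2) = preYT q' (M + 2) →
      ∃ L, ChainDefined (M + 2) L p' ∧ ∀ k < M + 2, applySeq (M + 2) L p' k = q' k)
    (p : ℕ → ℕ × ℕ) (hp : IsSYT (M + 3) p) (hq : IsSYT (M + 3) q) (ht : IsSYT (M + 3) t)
    (hpreq : preYT p (M + 3) = preYT q (M + 3)) (hpret : preYT t (M + 3) = preYT p (M + 3))
    (htop : t (M + 2) = p (M + 2)) (hsecond : t (M + 1) = q (M + 2))
    (pr : ℕ × ℕ) (hadj : Adjacent pr.1 pr.2) (hi : pr.1 + 1 < M + 3) (hj : pr.2 + 1 < M + 3)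
    (hDt : DYT (M + 3) pr.1 pr.2 t)
    (hfeq : fYT (M + 3) pr.1 pr.2 t = swapEntries (M + 1) t) :
    ∃ L, ChainDefined (M + 3) L p ∧ ∀ k < M + 3, applySeq (M + 3) L p k = q k := by
  have h23 : (M + 2 : ℕ) ≤ M + 3 := Nat.le_succ _
  -- chain 1 : from p to t
  have hpre1 : preYT p (M + 2) = preYT t (M + 2) := by
    rw [preYT_top hp, preYT_top ht, hpret, htop]
  obtain ⟨L1, hL1, hv1⟩ := ih p t (isSYT_mono h23 hp) (isSYT_mono h23 ht) hpre1
  obtain ⟨hL1n, happ1⟩ := chain_lift h23 L1 p hp hL1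
  have hP1t : EqB (M + 3) (applySeq (M + 3) L1 p) t := by
    intro k hk
    rcases Nat.lt_or_ge k (M + 2) with h | h
    · rw [happ1]; exact hv1 k h
    · have hkm : k = M + 2 := by omega
      rw [hkm, applySeq_high h23 L1 p hp hL1 (M + 2) le_rfl, htop]
  have hP1syt : IsSYT (M + 3) (applySeq (M + 3) L1 p) := isSYT_congr hP1t.symm ht
  -- the middle move
  have hDP1 : DYT (M + 3) pr.1 pr.2 (applySeq (M + 3) L1 p) := (DYT_congr hP1t).2 hDt
  have hP2syt : IsSYT (M + 3) (fYT (M + 3) pr.1 pr.2 (applySeq (M + 3) L1 p)) :=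
    (fYT_DYT hadj hi hj hDP1).1
  have ht2syt : IsSYT (M + 3) (swapEntries (M + 1) t) := by
    have h5 := (fYT_DYT hadj hi hj hDt).1
    rwa [hfeq] at h5
  have hP2t2 : EqB (M + 3) (fYT (M + 3) pr.1 pr.2 (applySeq (M + 3) L1 p))
      (swapEntries (M + 1) t) := by
    have h5 := fYT_congr_below hP1syt ht hP1t le_rfl hi hj
    rw [hfeq] at h5
    exact h5
  have ht2top : swapEntries (M + 1) t (M + 2) = q (M + 2) := by
    rw [swapEntries_right, hsecond]
  -- chain 2 : from the image to q
  have hpre2 : preYT (fYT (M + 3) pr.1 pr.2 (applySeq (M + 3) L1 p)) (M + 2)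
      = preYT q (M + 2) := by
    rw [preYT_congr hP2t2 h23, preYT_top ht2syt, preYT_top hq]
    rw [show preYT (swapEntries (M + 1) t) (M + 3) = preYT t (M + 3) from
      preYT_swapEntries_ge (by omega)]
    rw [hpret, hpreq, ht2top]
  obtain ⟨L2, hL2, hv2⟩ := ih (fYT (M + 3) pr.1 pr.2 (applySeq (M + 3) L1 p)) q
    (isSYT_mono h23 hP2syt) (isSYT_mono h23 hq) hpre2
  obtain ⟨hL2n, happ2⟩ := chain_lift h23 L2 _ hP2syt hL2
  refine ⟨L1 ++ (pr :: L2), ?_, ?_⟩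
  · refine ChainDefined_append hL1n ?_
    exact ⟨hadj, hi, hj, hDP1, hL2n⟩
  · intro k hk
    rw [applySeq_append]
    have hstep : applySeq (M + 3) (pr :: L2) (applySeq (M + 3) L1 p)
        = applySeq (M + 3) L2 (fYT (M + 3) pr.1 pr.2 (applySeq (M + 3) L1 p)) := rfl
    rw [hstep]
    rcases Nat.lt_or_ge k (M + 2) with h | h
    · rw [happ2]; exact hv2 k h
    · have hkm : k = M + 2 := by omega
      rw [hkm, applySeq_high h23 L2 _ hP2syt hL2 (M + 2) le_rfl]
      rw [hP2t2 (M + 2) (by omega), ht2top]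

/-- Connectivity: same-shape SYT are connected by chains of `f`-moves. -/
lemma conn : ∀ (m : ℕ) (p q : ℕ → ℕ × ℕ), IsSYT m p → IsSYT m q →
    preYT p m = preYT q m →
    ∃ L, ChainDefined m L p ∧ ∀ k < m, applySeq m L p k = q k := by
  intro m
  induction m with
  | zero =>
    intro p q _ _ _
    exact ⟨[], trivial, fun k hk => absurd hk (Nat.not_lt_zero k)⟩
  | succ m ih =>
    intro p q hp hq hpre
    by_cases hzz : p m = q m
    · -- same top corner : recurse directly
      have hpre' : preYT p m = preYT q m := by
        rw [preYT_top hp, preYT_top hq, hpre, hzz]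
      obtain ⟨L, hL, hval⟩ := ih p q (isSYT_mono (Nat.le_succ m) hp)
        (isSYT_mono (Nat.le_succ m) hq) hpre'
      obtain ⟨hLn, happ⟩ := chain_lift (Nat.le_succ m) L p hp hL
      refine ⟨L, hLn, fun k hk => ?_⟩
      rcases Nat.lt_or_ge k m with h | h
      · rw [happ]; exact hval k h
      · have hkm : k = m := by omega
        rw [hkm, applySeq_high (Nat.le_succ m) L p hp hL m le_rfl]
        exact hzz
    · -- different top corners
      have hSlow : IsLowerSet (preYT p (m + 1)) := preYT_lower hp le_rfl
      have hSfin : (preYT p (m + 1)).Finite := preYT_finite p (m + 1)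
      have hzS : p m ∈ preYT p (m + 1) := mem_preYT_self (Nat.lt_succ_self m)
      have hz'S : q m ∈ preYT p (m + 1) := by
        rw [hpre]; exact mem_preYT_self (Nat.lt_succ_self m)
      have hzlow : IsLowerSet (preYT p (m + 1) \ {p m}) := by
        rw [← preYT_top hp]; exact preYT_lower hp (Nat.le_succ m)
      have hz'low : IsLowerSet (preYT p (m + 1) \ {q m}) := by
        rw [hpre, ← preYT_top hq]; exact preYT_lower hq (Nat.le_succ m)
      have hnle1 : ¬ p m ≤ q m := by
        intro hle
        have hq' : q m ∈ preYT p (m + 1) \ {p m} :=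
          ⟨hz'S, fun hc => hzz (Set.mem_singleton_iff.1 hc).symm⟩
        exact (hzlow hle hq').2 rfl
      have hnle2 : ¬ q m ≤ p m := by
        intro hle
        have hp' : p m ∈ preYT p (m + 1) \ {q m} :=
          ⟨hzS, fun hc => hzz (Set.mem_singleton_iff.1 hc)⟩
        exact (hz'low hle hp').2 rfl
      have hrowne : (p m).1 ≠ (q m).1 := by
        intro he
        rcases le_total (p m).2 (q m).2 with h | h
        · exact hnle1 ⟨le_of_eq he, h⟩
        · exact hnle2 ⟨le_of_eq he.symm, h⟩
      have hm2 : 2 ≤ m := by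
        by_contra hc
        push_neg at hc
        rcases (by omega : m = 0 ∨ m = 1) with h0 | h1
        · subst h0
          have hmem : q 0 ∈ preYT p 1 := by rw [hpre]; exact mem_preYT_self Nat.one_pos
          obtain ⟨j, hj, hjq⟩ := hmem
          have : j = 0 := by omega
          subst this
          exact hzz hjq
        · subst h1
          have hmem : q 1 ∈ preYT p 2 := by rw [hpre]; exact mem_preYT_self (by omega)
          obtain ⟨j, hj, hjq⟩ := hmem
          rcases (by omega : j = 0 ∨ j = 1) with h | h
          · rw [h, p_zero hp (by omega), ← p_zero hq (by omega)] at hjq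
            exact absurd (hq.1 (Set.mem_Iio.2 (by omega)) (Set.mem_Iio.2 (by omega)) hjq)
              (by omega)
          · rw [h] at hjq
            exact hzz hjq
      obtain ⟨M, rfl⟩ : ∃ M, m = M + 2 := ⟨m - 2, by omega⟩
      -- set-level bookkeeping
      have hμlow : IsLowerSet ((preYT p (M + 2 + 1) \ {p (M + 2)}) \ {q (M + 2)}) := by
        intro a b hba ha
        obtain ⟨⟨haS, haz⟩, haz'⟩ := ha
        refine ⟨⟨hSlow hba haS, ?_⟩, ?_⟩
        · intro hbeq
          rw [Set.mem_singleton_iff] at hbeq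
          subst hbeq
          exact (hzlow hba ⟨haS, haz⟩).2 rfl
        · intro hbeq
          rw [Set.mem_singleton_iff] at hbeq
          subst hbeq
          exact (hz'low hba ⟨haS, haz'⟩).2 rfl
      have hScard : (preYT p (M + 2 + 1)).ncard = M + 3 := preYT_ncard hp le_rfl
      have hz'mem : q (M + 2) ∈ preYT p (M + 2 + 1) \ {p (M + 2)} :=
        ⟨hz'S, fun hc => hzz (Set.mem_singleton_iff.1 hc).symm⟩
      have hμcard : ((preYT p (M + 2 + 1) \ {p (M + 2)}) \ {q (M + 2)}).ncard = M + 1 := by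
        rw [Set.ncard_diff_singleton_of_mem hz'mem,
          Set.ncard_diff_singleton_of_mem hzS, hScard]
        omega
      have hμfin : ((preYT p (M + 2 + 1) \ {p (M + 2)}) \ {q (M + 2)}).Finite :=
        hSfin.diff.diff
      have hset1 : ((preYT p (M + 2 + 1) \ {p (M + 2)}) \ {q (M + 2)}) ∪ {q (M + 2)}
          = preYT p (M + 2 + 1) \ {p (M + 2)} := by
        rw [Set.diff_union_self]
        exact Set.union_eq_self_of_subset_right (Set.singleton_subset_iff.2 hz'mem)
      have hset2 : (preYT p (M + 2 + 1) \ {p (M + 2)}) ∪ {p (M + 2)} = preYT p (M + 2 + 1) := by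
        rw [Set.diff_union_self]
        exact Set.union_eq_self_of_subset_right (Set.singleton_subset_iff.2 hzS)
      -- find the auxiliary corner x and build the prepared tableau t
      rcases Nat.lt_or_ge (p (M + 2)).1 (q (M + 2)).1 with hAB | hAB
      · -- Case A : row of p-corner above row of q-corner ; x in row (q-corner row) - 1
        have hq1pos : 1 ≤ (q (M + 2)).1 := by omega
        have hbox : ((q (M + 2)).1 - 1, (q (M + 2)).2)
            ∈ (preYT p (M + 2 + 1) \ {p (M + 2)}) \ {q (M + 2)} := by
          refine ⟨⟨hSlow (Prod.mk_le_mk.2 ⟨by omega, le_rfl⟩) hz'S, ?_⟩, ?_⟩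
          · intro hc
            rw [Set.mem_singleton_iff] at hc
            apply hnle1
            rw [← hc]
            exact Prod.mk_le_mk.2 ⟨by omega, le_rfl⟩
          · intro hc
            rw [Set.mem_singleton_iff] at hc
            have := congrArg Prod.fst hc
            simp only at this
            omega
        have hbox2 : ((q (M + 2)).1, (q (M + 2)).2)
            ∉ (preYT p (M + 2 + 1) \ {p (M + 2)}) \ {q (M + 2)} := by
          intro hc
          exact hc.2 (by simp)
        obtain ⟨x, hxμ, hxr1, hxr2, hxlow⟩ := corner_exists hμlow hμfin hbox hbox2
        have hx1 : x.1 = (q (M + 2)).1 - 1 := by omega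
        -- build t
        obtain ⟨t0, ht0, hpre0, ht0M⟩ := exists_SYT_top hμlow hμfin hμcard hxμ hxlow
        obtain ⟨t1, ht1, hpre1', ht1M1, ht1eq⟩ := isSYT_extend ht0 hpre0
          (fun hc => hc.2 rfl) (by rw [hset1]; exact hzlow)
        obtain ⟨t, ht, hpret', htM2, hteq⟩ := isSYT_extend ht1 hpre1'
          (by
            intro hc
            rcases hc with hc | hc
            · exact hc.1.2 rfl
            · exact hzz (Set.mem_singleton_iff.1 hc))
          (by rw [hset1, hset2]; exact hSlow)
        have htM1 : t (M + 1) = q (M + 2) := by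
          rw [hteq (M + 1) (by omega), ht1M1]
        have htM : t M = x := by
          rw [hteq M (by omega), ht1eq M (by omega), ht0M]
        have hpretS : preYT t (M + 3) = preYT p (M + 3) := by
          rw [hpret', hset1, hset2]
        -- the move
        have hT : (t M).1 < (t (M + 1)).1 := by
          rw [htM, htM1]; omega
        have hFrow : ¬ (t (M + 1)).1 < (t (M + 2)).1 := by
          rw [htM1, htM2]; omega
        have spec := fYT_spec_lt ht (by omega) hT hFrow
        have hfeq : fYT (M + 3) M (M + 1) t = swapEntries (M + 1) t := by
          rcases spec.1 with ⟨-, hfeq⟩ | ⟨hcond, -⟩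
          · exact hfeq
          · exfalso
            rw [htM, htM2] at hcond
            omega
        have hDt : DYT (M + 3) M (M + 1) t := by
          refine ⟨ht, ⟨by omega, hT⟩, ?_⟩
          intro hc
          have hc2 := hc.2
          have e : t (M + 1 + 1) = t (M + 2) := rfl
          rw [e] at hc2
          exact hFrow hc2
        exact conn_step ih p hp hq ht hpre hpretS htM2 htM1 (M, M + 1) (Or.inr rfl)
          (by omega) (by omega) hDt hfeq
      · -- Case B : row of p-corner below row of q-corner ; x in row (p-corner row) - 1
        have hBlt : (q (M + 2)).1 < (p (M + 2)).1 := by omega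
        have hp1pos : 1 ≤ (p (M + 2)).1 := by omega
        have hbox : ((p (M + 2)).1 - 1, (p (M + 2)).2)
            ∈ (preYT p (M + 2 + 1) \ {p (M + 2)}) \ {q (M + 2)} := by
          refine ⟨⟨hSlow (Prod.mk_le_mk.2 ⟨by omega, le_rfl⟩) hzS, ?_⟩, ?_⟩
          · intro hc
            rw [Set.mem_singleton_iff] at hc
            have := congrArg Prod.fst hc
            simp only at this
            omega
          · intro hc
            rw [Set.mem_singleton_iff] at hc
            apply hnle2
            rw [← hc]
            exact Prod.mk_le_mk.2 ⟨by omega, le_rfl⟩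
        have hbox2 : ((p (M + 2)).1, (p (M + 2)).2)
            ∉ (preYT p (M + 2 + 1) \ {p (M + 2)}) \ {q (M + 2)} := by
          intro hc
          exact hc.1.2 (by simp)
        obtain ⟨x, hxμ, hxr1, hxr2, hxlow⟩ := corner_exists hμlow hμfin hbox hbox2
        have hx1 : x.1 = (p (M + 2)).1 - 1 := by omega
        obtain ⟨t0, ht0, hpre0, ht0M⟩ := exists_SYT_top hμlow hμfin hμcard hxμ hxlow
        obtain ⟨t1, ht1, hpre1', ht1M1, ht1eq⟩ := isSYT_extend ht0 hpre0
          (fun hc => hc.2 rfl) (by rw [hset1]; exact hzlow)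
        obtain ⟨t, ht, hpret', htM2, hteq⟩ := isSYT_extend ht1 hpre1'
          (by
            intro hc
            rcases hc with hc | hc
            · exact hc.1.2 rfl
            · exact hzz (Set.mem_singleton_iff.1 hc))
          (by rw [hset1, hset2]; exact hSlow)
        have htM1 : t (M + 1) = q (M + 2) := by
          rw [hteq (M + 1) (by omega), ht1M1]
        have htM : t M = x := by
          rw [hteq M (by omega), ht1eq M (by omega), ht0M]
        have hpretS : preYT t (M + 3) = preYT p (M + 3) := by
          rw [hpret', hset1, hset2]
        have hT : (t (M + 1)).1 < (t (M + 2)).1 := by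
          rw [htM1, htM2]; omega
        have hFrow : ¬ (t M).1 < (t (M + 1)).1 := by
          rw [htM, htM1]; omega
        have spec := fYT_spec_gt ht (by omega) hT hFrow
        have hfeq : fYT (M + 3) (M + 1) M t = swapEntries (M + 1) t := by
          rcases spec.1 with ⟨hcond, -⟩ | ⟨-, hfeq⟩
          · exfalso
            rw [htM, htM2] at hcond
            omega
          · exact hfeq
        have hDt : DYT (M + 3) (M + 1) M t := by
          refine ⟨ht, ⟨by omega, ?_⟩, ?_⟩
          · have e : t (M + 1 + 1) = t (M + 2) := rfl
            rw [e]
            exact hT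
          · intro hc
            exact hFrow hc.2
        exact conn_step ih p hp hq ht hpre hpretS htM2 htM1 (M + 1, M) (Or.inl rfl)
          (by omega) (by omega) hDt hfeq

end Vogan

namespace Vogan

open Set

/-- Applying a chain of moves (valid on the common `n-1` lower part) to both members
of a τ-equivalent pair preserves equivalence, agreement below `n-1`, and top entries. -/
lemma amb {n : ℕ} : ∀ (L : List (ℕ × ℕ)) (p p' : ℕ → ℕ × ℕ), IsSYT n p → IsSYT n p' →
    (∀ K, approxYT n K p p') → EqB (n - 1) p p' → ChainDefined (n - 1) L p →
    (∀ K, approxYT n K (applySeq n L p) (applySeq n L p')) ∧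
    EqB (n - 1) (applySeq n L p) (applySeq n L p') ∧
    applySeq n L p (n - 1) = p (n - 1) ∧ applySeq n L p' (n - 1) = p' (n - 1) := by
  intro L
  induction L with
  | nil => intro p p' hp hp' happ heq _; exact ⟨happ, heq, rfl, rfl⟩
  | cons ij L ihL =>
    intro p p' hp hp' happ heq hc
    obtain ⟨hadj, hi, hj, hD, hrest⟩ := hc
    have hm : (n - 1 : ℕ) ≤ n := Nat.sub_le n 1
    have hin : ij.1 + 1 < n := by omega
    have hjn : ij.2 + 1 < n := by omega
    have hDn : DYT n ij.1 ij.2 p := (DYT_restrict hm hi hj hp).1 hD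
    have htaueq : tauYT n p = tauYT n p' := happ 0
    have hDn' : DYT n ij.1 ij.2 p' := ⟨hp', htaueq ▸ hDn.2.1, htaueq ▸ hDn.2.2⟩
    have happ2 : ∀ K, approxYT n K (fYT n ij.1 ij.2 p) (fYT n ij.1 ij.2 p') :=
      fun K => (happ (K + 1)).2 ij.1 ij.2 hadj hin hjn hDn hDn'
    have hfp := fYT_DYT hadj hin hjn hDn
    have hfp' := fYT_DYT hadj hin hjn hDn'
    have heq2 : EqB (n - 1) (fYT n ij.1 ij.2 p) (fYT n ij.1 ij.2 p') :=
      fYT_congr_below hp hp' heq hm hi hj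
    have hfeq : fYT (n - 1) ij.1 ij.2 p = fYT n ij.1 ij.2 p := fYT_restrict hm hi hj hp
    rw [hfeq] at hrest
    have hIH := ihL (fYT n ij.1 ij.2 p) (fYT n ij.1 ij.2 p') hfp.1 hfp'.1 happ2 heq2 hrest
    rw [applySeq_cons, applySeq_cons]
    refine ⟨hIH.1, hIH.2.1, ?_, ?_⟩
    · rw [hIH.2.2.1, fYT_high hi hj (le_refl (n - 1))]
    · rw [hIH.2.2.2, fYT_high hi hj (le_refl (n - 1))]

/-- The endgame: a τ-equivalent pair agreeing below the top entry with top entries at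
corners in different rows is impossible. -/
lemma key {N : ℕ} (p p' : ℕ → ℕ × ℕ) (hp : IsSYT (N + 2) p) (hp' : IsSYT (N + 2) p')
    (h : ∀ K : ℕ, approxYT (N + 2) K p p') (hbelow : EqB (N + 1) p p')
    (hlt : (p (N + 1)).1 < (p' (N + 1)).1) : False := by
  have hpre : preYT p (N + 1) = preYT p' (N + 1) := preYT_congr hbelow le_rfl
  have hllow : IsLowerSet (preYT p (N + 1)) := preYT_lower hp (by omega)
  have hlfin := preYT_finite p (N + 1)
  have hlcard : (preYT p (N + 1)).ncard = N + 1 := preYT_ncard hp (by omega)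
  have hc'pos : 1 ≤ (p' (N + 1)).1 := by omega
  -- the reference box just above the corner of p'
  have hboxmem : ((p' (N + 1)).1 - 1, (p' (N + 1)).2) ∈ preYT p (N + 1) := by
    rw [hpre]
    apply lower_step hp' (by omega) (Prod.mk_le_mk.2 ⟨by omega, le_rfl⟩)
    intro hc
    have := congrArg Prod.fst hc
    simp only at this
    omega
  have hboxnot : ((p' (N + 1)).1, (p' (N + 1)).2) ∉ preYT p (N + 1) := by
    rw [hpre]
    rw [show ((p' (N + 1)).1, (p' (N + 1)).2) = p' (N + 1) from rfl]
    exact self_not_mem_preYT hp' (by omega) le_rfl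
  obtain ⟨x, hxmem, hxr1, hxr2, hxlow⟩ := corner_exists hllow hlfin hboxmem hboxnot
  -- a tableau of the common shape whose top entry is at the corner x
  obtain ⟨W, hW, hWpre, hWtop⟩ := exists_SYT_top hllow hlfin hlcard hxmem hxlow
  obtain ⟨L, hL, hv⟩ := conn (N + 1) p W (isSYT_mono (by omega) hp) hW hWpre.symm
  have hamb := amb L p p' hp hp' h (fun k hk => hbelow k hk) hL
  obtain ⟨happF, heqF, htopP, htopP'⟩ := hamb
  have htopP1 : applySeq (N + 2) L p (N + 1) = p (N + 1) := htopP
  have htopP1' : applySeq (N + 2) L p' (N + 1) = p' (N + 1) := htopP'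
  have htaueq : tauYT (N + 2) (applySeq (N + 2) L p)
      = tauYT (N + 2) (applySeq (N + 2) L p') := happF 0
  obtain ⟨hLn2, happn⟩ := chain_lift (show (N + 1 : ℕ) ≤ N + 2 by omega) L p hp hL
  have hPN : applySeq (N + 2) L p N = x := by
    rw [happn, hv N (by omega), hWtop]
  have hP'N : applySeq (N + 2) L p' N = x := by
    have h5 : applySeq (N + 2) L p N = applySeq (N + 2) L p' N := heqF N (by omega)
    rw [← h5]
    exact hPN
  have hmem' : N ∈ tauYT (N + 2) (applySeq (N + 2) L p') := by
    rw [mem_tauYT]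
    refine ⟨by omega, ?_⟩
    rw [hP'N, htopP1']
    omega
  have hmem : N ∉ tauYT (N + 2) (applySeq (N + 2) L p) := by
    rw [mem_tauYT]
    rintro ⟨-, hcon⟩
    rw [hPN, htopP1] at hcon
    omega
  rw [htaueq] at hmem
  exact hmem hmem'

/-- The main induction. -/
lemma main : ∀ (n : ℕ) (p p' : ℕ → ℕ × ℕ), IsSYT n p → IsSYT n p' →
    (∀ m : ℕ, approxYT n m p p') → ∀ k < n, p k = p' k := by
  intro n
  induction n with
  | zero => intro p p' _ _ _ k hk; omega
  | succ n ih =>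
    intro p p' hp hp' h k hk
    have hbelow : ∀ j < n, p j = p' j :=
      ih p p' (isSYT_mono (Nat.le_succ n) hp) (isSYT_mono (Nat.le_succ n) hp')
        (fun m => approxYT_restrict (Nat.le_succ n) m p p'  hp hp' (h m))
    rcases Nat.lt_or_ge k n with hkn | hkn
    · exact hbelow k hkn
    have hk' : k = n := by omega
    rw [hk']
    by_contra hne
    rcases Nat.eq_zero_or_pos n with h0 | hn1
    · refine hne ?_
      rw [h0, p_zero hp (by omega), p_zero hp' (by omega)]
    obtain ⟨N, rfl⟩ : ∃ N, n = N + 1 := ⟨n - 1, by omega⟩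
    have hbelow' : EqB (N + 1) p p' := fun j hj => hbelow j hj
    rcases lt_trichotomy (p (N + 1)).1 (p' (N + 1)).1 with hc | hc | hc
    · exact key p p' hp hp' h hbelow' hc
    · -- same row : both addable to the same shape forces equality
      have hpre : preYT p (N + 1) = preYT p' (N + 1) := preYT_congr hbelow' le_rfl
      have h1 : p (N + 1) ∉ preYT p (N + 1) := self_not_mem_preYT hp (by omega) le_rfl
      have h2 : p' (N + 1) ∉ preYT p (N + 1) := by
        rw [hpre]
        exact self_not_mem_preYT hp' (by omega) le_rfl
      rcases le_total (p (N + 1)).2 (p' (N + 1)).2 with h3 | h3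
      · have hle : p (N + 1) ≤ p' (N + 1) := ⟨le_of_eq hc, h3⟩
        have := lower_step hp' (by omega) hle hne
        rw [← hpre] at this
        exact h1 this
      · have hle : p' (N + 1) ≤ p (N + 1) := ⟨le_of_eq hc.symm, h3⟩
        have := lower_step hp (by omega) hle (fun hcc => hne hcc.symm)
        exact h2 this
    · exact key p' p hp' hp (fun K => approxYT_symm K (h K)) hbelow'.symm hc

end Vogan

/-- **Vogan.** Standard Young tableaux with `n` boxes having the
same generalized τ-invariant are equal. -/
theorem stmt7 (n : ℕ) (p p' : ℕ → ℕ × ℕ) (hp : IsSYT n p) (hp' : IsSYT n p')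
    (h : ∀ m : ℕ, approxYT n m p p') :
    ∀ k < n, p k = p' k := by
  exact Vogan.main n p p' hp hp' h
end
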